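/- The logic Box = wPL ⊕ bw_2 ⊕ (¬p ∨ ¬¬p) equals Log({S_n : n ∈ ω}), the logic of the class of posets S_n. -/

import Mathlib

/-! # Common framework: superintuitionistic logics, Kripke frames and models -/

/-! ## Intuitionistic propositional formulas -/

inductive Form : Type
  | var : ℕ → Form
  | bot : Form
  | top : Form
  | and : Form → Form → Form
  | or  : Form → Form → Form
  | imp : Form → Form → Form
deriving DecidableEq

namespace Form

/-- Implication depth of a formula. -/
def depth : Form → ℕ
  | var _ => 0
  | bot => 0
  | top => 0
  | and φ ψ => max φ.depth ψ.depth
  | or φ ψ => max φ.depth ψ.depth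
  | imp φ ψ => max φ.depth ψ.depth + 1

/-- All propositional variables of the formula are among `p_0, …, p_{m-1}`. -/
def varsLt (m : ℕ) : Form → Prop
  | var p => p < m
  | bot => True
  | top => True
  | and φ ψ => φ.varsLt m ∧ ψ.varsLt m
  | or φ ψ => φ.varsLt m ∧ ψ.varsLt m
  | imp φ ψ => φ.varsLt m ∧ ψ.varsLt m

/-- Uniform substitution. -/
def subst (σ : ℕ → Form) : Form → Form
  | var p => σ p
  | bot => bot
  | top => top
  | and φ ψ => and (φ.subst σ) (ψ.subst σ)
  | or φ ψ => or (φ.subst σ) (ψ.subst σ)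
  | imp φ ψ => imp (φ.subst σ) (ψ.subst σ)

/-- Biconditional. -/
def iff (φ ψ : Form) : Form := and (imp φ ψ) (imp ψ φ)

/-- Negation. -/
def neg (φ : Form) : Form := imp φ bot

end Form

/-! ## IPC and superintuitionistic logics -/

/-- A Hilbert-style axiomatization of intuitionistic propositional logic. -/
inductive IPC : Form → Prop
  | ax1 (φ ψ : Form) : IPC (.imp φ (.imp ψ φ))
  | ax2 (φ ψ χ : Form) :
      IPC (.imp (.imp φ (.imp ψ χ)) (.imp (.imp φ ψ) (.imp φ χ)))
  | andE1 (φ ψ : Form) : IPC (.imp (.and φ ψ) φ)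
  | andE2 (φ ψ : Form) : IPC (.imp (.and φ ψ) ψ)
  | andI (φ ψ : Form) : IPC (.imp φ (.imp ψ (.and φ ψ)))
  | orI1 (φ ψ : Form) : IPC (.imp φ (.or φ ψ))
  | orI2 (φ ψ : Form) : IPC (.imp ψ (.or φ ψ))
  | orE (φ ψ χ : Form) :
      IPC (.imp (.imp φ χ) (.imp (.imp ψ χ) (.imp (.or φ ψ) χ)))
  | botE (φ : Form) : IPC (.imp .bot φ)
  | topI : IPC .top
  | mp (φ ψ : Form) : IPC (.imp φ ψ) → IPC φ → IPC ψ

/-- The set of theorems of IPC. -/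
def IPCSet : Set Form := {φ | IPC φ}

/-- A superintuitionistic logic: a set of formulas containing all theorems of
IPC, closed under modus ponens and uniform substitution. -/
def IsSILogic (L : Set Form) : Prop :=
  IPCSet ⊆ L ∧
  (∀ φ ψ : Form, Form.imp φ ψ ∈ L → φ ∈ L → ψ ∈ L) ∧
  (∀ (φ : Form) (σ : ℕ → Form), φ ∈ L → φ.subst σ ∈ L)

/-- `oplus L Γ` is the least superintuitionistic logic containing `L` and `Γ`
(written `L ⊕ Γ`). -/
def oplus (L Γ : Set Form) : Set Form :=
  ⋂₀ {M : Set Form | IsSILogic M ∧ L ⊆ M ∧ Γ ⊆ M}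

/-- A logic is `n`-uniform if every formula is provably equivalent in it to a
formula of implication depth at most `n`. -/
def Uniform (L : Set Form) (n : ℕ) : Prop :=
  ∀ φ : Form, ∃ ψ : Form, ψ.depth ≤ n ∧ Form.iff φ ψ ∈ L

/-- A logic is locally tabular if over each finite tuple of variables there are
only finitely many formulas up to provable equivalence. -/
def LocallyTabular (L : Set Form) : Prop :=
  ∀ m : ℕ, ∃ Φ : Finset Form, ∀ φ : Form, φ.varsLt m → ∃ ψ ∈ Φ, Form.iff φ ψ ∈ L

/-! ## Kripke frames (posets) -/

structure Frame : Type 1 where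
  W : Type
  le : W → W → Prop
  refl : ∀ x, le x x
  trans : ∀ x y z, le x y → le y z → le x z
  antisymm : ∀ x y, le x y → le y x → x = y

namespace Frame

def lt (F : Frame) (a b : F.W) : Prop := F.le a b ∧ a ≠ b

/-- A valuation is persistent if it is preserved upwards. -/
def Persistent (F : Frame) (V : ℕ → F.W → Prop) : Prop :=
  ∀ p a b, F.le a b → V p a → V p b

/-- Kripke forcing. -/
def force (F : Frame) (V : ℕ → F.W → Prop) : Form → F.W → Prop
  | .var p, w => V p w
  | .bot, _ => False
  | .top, _ => True
  | .and φ ψ, w => F.force V φ w ∧ F.force V ψ w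
  | .or φ ψ, w => F.force V φ w ∨ F.force V ψ w
  | .imp φ ψ, w => ∀ v, F.le w v → F.force V φ v → F.force V ψ v

/-- `F ⊩ φ`. -/
def Valid (F : Frame) (φ : Form) : Prop :=
  ∀ V : ℕ → F.W → Prop, F.Persistent V → ∀ w : F.W, F.force V φ w

def Rooted (F : Frame) : Prop := ∃ r, ∀ w, F.le r w

/-- The subposet on a subset of the carrier. -/
def restrict (F : Frame) (s : Set F.W) : Frame where
  W := s
  le a b := F.le a.1 b.1
  refl a := F.refl a.1
  trans a b c h1 h2 := F.trans a.1 b.1 c.1 h1 h2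
  antisymm a b h1 h2 := Subtype.ext (F.antisymm a.1 b.1 h1 h2)

/-- The rooted upset `↑z`. -/
def up (F : Frame) (z : F.W) : Frame := F.restrict {w | F.le z w}

/-- There is a chain of `d` elements in `↑w` starting at `w`. -/
def hasChainUp (F : Frame) (w : F.W) (d : ℕ) : Prop :=
  ∃ f : Fin d → F.W, (∀ i : Fin d, (i : ℕ) = 0 → f i = w) ∧
    (∀ i j : Fin d, (i : ℕ) < (j : ℕ) → F.lt (f i) (f j))

/-- The depth of `w` is `d`: the longest chain in `↑w` has exactly `d` elements. -/
def depthEq (F : Frame) (w : F.W) (d : ℕ) : Prop :=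
  F.hasChainUp w d ∧ ¬ F.hasChainUp w (d + 1)

/-- The covering relation of the poset. -/
def covBy (F : Frame) (a b : F.W) : Prop :=
  F.lt a b ∧ ∀ c, F.lt a c → F.lt c b → False

end Frame

/-- A p-morphism of posets. -/
def IsPMorphism (P Q : Frame) (f : P.W → Q.W) : Prop :=
  (∀ a b, P.le a b → Q.le (f a) (f b)) ∧
  (∀ a b, Q.le (f a) b → ∃ a', P.le a a' ∧ f a' = b)

/-- `Q` is a p-morphic image of `P`. -/
def PMorphicImage (P Q : Frame) : Prop :=
  ∃ f : P.W → Q.W, IsPMorphism P Q f ∧ Function.Surjective f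

/-- Order isomorphism of posets. -/
def FrameIso (P Q : Frame) : Prop :=
  ∃ f : P.W → Q.W, Function.Bijective f ∧ ∀ a b, P.le a b ↔ Q.le (f a) (f b)

/-- The logic of a class of posets. -/
def LogK (K : Set Frame) : Set Form := {φ | ∀ F ∈ K, F.Valid φ}

/-- The logic of a single poset. -/
def FrameLog (F : Frame) : Set Form := {φ | F.Valid φ}

/-- `J` is a Yankov formula for the finite rooted poset `Q`: a finite poset
refutes `J` exactly when `Q` is isomorphic to a rooted upset of one of its
p-morphic images. -/
def IsYankov (J : Form) (Q : Frame) : Prop :=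
  ∀ P : Frame, Finite P.W →
    (¬ P.Valid J ↔ ∃ G : Frame, PMorphicImage P G ∧ ∃ z : G.W, FrameIso (G.up z) Q)

/-! ## Rooted Kripke models over `n` propositional variables -/

structure Model (n : ℕ) : Type 1 where
  W : Type
  le : W → W → Prop
  refl : ∀ x, le x x
  trans : ∀ x y z, le x y → le y z → le x z
  antisymm : ∀ x y, le x y → le y x → x = y
  root : W
  rooted : ∀ w, le root w
  col : W → Set (Fin n)
  mono : ∀ a b, le a b → col a ⊆ col b

namespace Model

/-- The underlying poset of a model. -/
def frame {n : ℕ} (M : Model n) : Frame :=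
  ⟨M.W, M.le, M.refl, M.trans, M.antisymm⟩

def force {n : ℕ} (M : Model n) : Form → M.W → Prop
  | .var p, w => ∃ h : p < n, (⟨p, h⟩ : Fin n) ∈ M.col w
  | .bot, _ => False
  | .top, _ => True
  | .and φ ψ, w => M.force φ w ∧ M.force ψ w
  | .or φ ψ, w => M.force φ w ∨ M.force ψ w
  | .imp φ ψ, w => ∀ v, M.le w v → M.force φ v → M.force ψ v

/-- Satisfaction at the root of the model. -/
def Sat {n : ℕ} (M : Model n) (φ : Form) : Prop := M.force φ M.root

/-- (Full) bisimilarity of two rooted models. -/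
def Bisim {n : ℕ} (M N : Model n) : Prop :=
  ∃ S : M.W → N.W → Prop,
    S M.root N.root ∧
    (∀ a b, S a b → M.col a = N.col b) ∧
    (∀ a b a', S a b → M.le a a' → ∃ b', N.le b b' ∧ S a' b') ∧
    (∀ a b b', S a b → N.le b b' → ∃ a', M.le a a' ∧ S a' b')

/-- `k`-bisimilarity of the points `x, y`, via a decreasing chain
`S k ⊆ ⋯ ⊆ S 0` of relations. -/
def NBisimAt {n : ℕ} (M N : Model n) (k : ℕ) (x : M.W) (y : N.W) : Prop :=
  ∃ S : ℕ → M.W → N.W → Prop,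
    (∀ j a b, S (j + 1) a b → S j a b) ∧
    S k x y ∧
    (∀ a b, S 0 a b → M.col a = N.col b) ∧
    (∀ j a b a', j < k → S (j + 1) a b → M.le a a' →
        ∃ b', N.le b b' ∧ S j a' b') ∧
    (∀ j a b b', j < k → S (j + 1) a b → N.le b b' →
        ∃ a', M.le a a' ∧ S j a' b')

/-- `k`-bisimilarity of two rooted models. -/
def NBisim {n : ℕ} (M N : Model n) (k : ℕ) : Prop :=
  NBisimAt M N k M.root N.root

/-- The submodel on the rooted upset `↑z`. -/
def up {n : ℕ} (M : Model n) (z : M.W) : Model n where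
  W := {w : M.W // M.le z w}
  le a b := M.le a.1 b.1
  refl a := M.refl a.1
  trans a b c h1 h2 := M.trans a.1 b.1 c.1 h1 h2
  antisymm a b h1 h2 := Subtype.ext (M.antisymm a.1 b.1 h1 h2)
  root := ⟨z, M.refl z⟩
  rooted w := w.2
  col a := M.col a.1
  mono a b h := M.mono a.1 b.1 h

/-- `(M, x) ≤ₖ (N, y)`: there is `z ≥ x` such that `(↑z, z)` is `k`-bisimilar
with `(N, y)`. -/
def LeBisim {n : ℕ} (M N : Model n) (k : ℕ) : Prop :=
  ∃ z : M.W, M.le M.root z ∧ NBisim (M.up z) N k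

/-- Two points of a model are bisimilar. -/
def PointsBisim {n : ℕ} (M : Model n) (a b : M.W) : Prop :=
  ∃ S : M.W → M.W → Prop,
    S a b ∧
    (∀ x y, S x y → M.col x = M.col y) ∧
    (∀ x y x', S x y → M.le x x' → ∃ y', M.le y y' ∧ S x' y') ∧
    (∀ x y y', S x y → M.le y y' → ∃ x', M.le x x' ∧ S x' y')

/-- A model over `n` variables is (`n`-)generated if it contains no two
distinct bisimilar points. -/
def Generated {n : ℕ} (M : Model n) : Prop :=
  ∀ a b : M.W, M.PointsBisim a b → a = b

/-- Isomorphism of models: a root-preserving, color-preserving order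
isomorphism. -/
def Iso {n : ℕ} (M N : Model n) : Prop :=
  ∃ f : M.W → N.W, Function.Bijective f ∧ f M.root = N.root ∧
    (∀ a b, M.le a b ↔ N.le (f a) (f b)) ∧ (∀ a, N.col (f a) = M.col a)

/-- `M` is a model over the class of posets `K`: its underlying poset is a
p-morphic image of a rooted upset of a member of `K`. -/
def InClass {n : ℕ} (K : Set Frame) (M : Model n) : Prop :=
  ∃ F ∈ K, ∃ z : F.W, PMorphicImage (F.up z) M.frame

/-- The model on the rooted upset `↑z` of a frame `F`, with coloring `c`. -/
def ofFrame (F : Frame) (z : F.W) (n : ℕ) (c : (F.up z).W → Set (Fin n))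
    (hc : ∀ a b : (F.up z).W, (F.up z).le a b → c a ⊆ c b) : Model n where
  W := (F.up z).W
  le := (F.up z).le
  refl := (F.up z).refl
  trans := (F.up z).trans
  antisymm := (F.up z).antisymm
  root := ⟨z, F.refl z⟩
  rooted w := w.2
  col := c
  mono := hc

end Model

/-! ## Boolean sums and stacks -/

/-- A (finite rooted) poset is a Boolean sum: it is rooted, covers decrease the
depth by exactly one, and every point of depth `k+1` lies below every point of
depth `k`. -/
def IsBooleanSum (F : Frame) : Prop :=
  F.Rooted ∧
  (∀ a b da db, F.covBy a b → F.depthEq a da → F.depthEq b db → da = db + 1) ∧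
  (∀ a b k, F.depthEq a (k + 1) → F.depthEq b k → F.le a b)

/-- `F` contains a `k`-stack: `k` consecutive layers (sets of points of equal
depth) each containing at least two points. -/
def HasStack (F : Frame) (k : ℕ) : Prop :=
  ∃ j : ℕ, ∀ i : ℕ, j ≤ i → i < j + k →
    ∃ a b : F.W, a ≠ b ∧ F.depthEq a i ∧ F.depthEq b i

/-! ## The posets Q₁, …, Q₈ -/

def q1le : Fin 4 → Fin 4 → Bool := fun a b =>
  a = b || a = 0 || (a = 1 && b = 3)
def q2le : Fin 5 → Fin 5 → Bool := fun a b =>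
  a = b || a = 0 || (a = 1 && (b = 3 || b = 4)) || (a = 2 && b = 4)
def q3le : Fin 5 → Fin 5 → Bool := fun a b =>
  a = b || a = 0 || (a = 1 && b = 4) || (a = 2 && (b = 3 || b = 4)) ||
    (a = 3 && b = 4)
def q4le : Fin 5 → Fin 5 → Bool := fun a b =>
  a = b || a = 0 || ((a = 1 || a = 2) && (b = 3 || b = 4))
def q5le : Fin 6 → Fin 6 → Bool := fun a b =>
  a = b || a = 0 || b = 5 || ((a = 1 || a = 2) && (b = 3 || b = 4))
def q6le : Fin 4 → Fin 4 → Bool := fun a b =>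
  a = b || a = 0 || b = 3
def q7le : Fin 5 → Fin 5 → Bool := fun a b =>
  a = b || a = 0 || (a = 1 && b = 3) || (a = 2 && b = 4)
def q8le : Fin 4 → Fin 4 → Bool := fun a b =>
  a = b || a = 0

/-- `Q₁`: root `0`; immediate successors `1`, `2`; `2` maximal; `3` the unique
(maximal) immediate successor of `1`. -/
def Q1f : Frame :=
  ⟨Fin 4, fun a b => q1le a b = true, by decide, by decide, by decide⟩
/-- `Q₂`: root `0`; immediate successors `1`, `2`; maximal points `3`, `4`;
`1 < 3`, `1 < 4`, `2 < 4`, `2 ≮ 3`. -/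
def Q2f : Frame :=
  ⟨Fin 5, fun a b => q2le a b = true, by decide, by decide, by decide⟩
/-- `Q₃`: root `0`; immediate successors `1`, `2`; `3` covers `2`; top `4`
with `1 < 4` and `3 < 4`. -/
def Q3f : Frame :=
  ⟨Fin 5, fun a b => q3le a b = true, by decide, by decide, by decide⟩
/-- `Q₄`: root `0`; `1`, `2` cover the root; maximal `3`, `4` above both `1`
and `2`. -/
def Q4f : Frame :=
  ⟨Fin 5, fun a b => q4le a b = true, by decide, by decide, by decide⟩
/-- `Q₅`: `Q₄` with a greatest element `5` added on top. -/
def Q5f : Frame :=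
  ⟨Fin 6, fun a b => q5le a b = true, by decide, by decide, by decide⟩
/-- `Q₆`: the diamond. -/
def Q6f : Frame :=
  ⟨Fin 4, fun a b => q6le a b = true, by decide, by decide, by decide⟩
/-- `Q₇`: root `0`; `1 < 3`, `2 < 4`, and no other strict relations above the
root. -/
def Q7f : Frame :=
  ⟨Fin 5, fun a b => q7le a b = true, by decide, by decide, by decide⟩
/-- `Q₈`: a root with three pairwise incomparable maximal points. -/
def Q8f : Frame :=
  ⟨Fin 4, fun a b => q8le a b = true, by decide, by decide, by decide⟩

/-! ## Particular logics -/

/-- The one-element poset. -/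
def unitFrame : Frame :=
  ⟨PUnit, fun _ _ => True, fun _ => trivial, fun _ _ _ _ _ => trivial,
    fun a b _ _ => Subsingleton.elim a b⟩

/-- The two-element chain. -/
def chain2 : Frame :=
  ⟨Bool, fun a b => a ≤ b, le_refl, fun _ _ _ => le_trans,
    fun _ _ => le_antisymm⟩

/-- Classical propositional logic: the logic of the one-element poset. -/
def CPC : Set Form := FrameLog unitFrame

/-- The logic of the two-element chain. -/
def Sme : Set Form := FrameLog chain2

/-- The weak Peirce law `(q → p) ∨ (((p → q) → p) → p)`. -/
def wPLax : Form :=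
  .or (.imp (.var 1) (.var 0))
    (.imp (.imp (.imp (.var 0) (.var 1)) (.var 0)) (.var 0))

/-- The logic `wPL = IPC ⊕ (q → p) ∨ (((p → q) → p) → p)`. -/
def wPL : Set Form := oplus IPCSet {wPLax}

/-- The bounded-width-2 axiom `⋁_{i≤2} (pᵢ → ⋁_{j≠i} pⱼ)`. -/
def bw2ax : Form :=
  .or (.imp (.var 0) (.or (.var 1) (.var 2)))
    (.or (.imp (.var 1) (.or (.var 0) (.var 2)))
      (.imp (.var 2) (.or (.var 0) (.var 1))))

/-- The axiom `¬p ∨ ¬¬p`. -/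
def kcax : Form := .or (Form.neg (.var 0)) (Form.neg (Form.neg (.var 0)))

/-- The logic `Box = wPL ⊕ bw₂ ⊕ (¬p ∨ ¬¬p)`. -/
def BoxLogic : Set Form := oplus wPL {bw2ax, kcax}

/-- The bounded-depth formulas. -/
def bd : ℕ → Form
  | 0 => .var 0
  | n + 1 => .or (.var (n + 1)) (.imp (.var (n + 1)) (bd n))

/-- The logic `BD_n = IPC ⊕ bd_n`. -/
def BD (n : ℕ) : Set Form := oplus IPCSet {bd n}

/-- A logic is of finite depth if it contains some `BD_n`. -/
def FiniteDepth (L : Set Form) : Prop := ∃ n, BD n ⊆ L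

/-! ## The Rieger–Nishimura ladder -/

/-- Points of the Rieger–Nishimura ladder: `inl k = L_k`, `inr k = R_k`. -/
abbrev RNpt : Type := ℕ ⊕ ℕ

/-- The covering relation of the Rieger–Nishimura ladder (`rnCov a b` means
`a ⋖ b`, i.e. `b` is an immediate successor of `a`). -/
inductive rnCov : RNpt → RNpt → Prop
  | ll (k : ℕ) : rnCov (.inl (k + 1)) (.inl k)
  | rr (k : ℕ) : rnCov (.inr (k + 1)) (.inr k)
  | rl (k : ℕ) : rnCov (.inr (k + 1)) (.inl k)
  | lr (k : ℕ) : rnCov (.inl (k + 2)) (.inr k)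

private def rnIdx : RNpt → ℕ
  | .inl k => 2 * k
  | .inr k => 2 * k + 1

private theorem rnCov_idx {a b : RNpt} (h : rnCov a b) : rnIdx b < rnIdx a := by
  cases h <;> simp [rnIdx] <;> omega

private theorem rnLe_idx {a b : RNpt} (h : Relation.ReflTransGen rnCov a b) :
    rnIdx b ≤ rnIdx a := by
  induction h with
  | refl => exact le_rfl
  | tail _ h₂ ih => exact le_trans (le_of_lt (rnCov_idx h₂)) ih

private theorem rnIdx_inj {a b : RNpt} (h : rnIdx a = rnIdx b) : a = b := by
  rcases a with a | a <;> rcases b with b | b <;> simp [rnIdx] at h ⊢ <;> omega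

/-- The Rieger–Nishimura ladder as a poset: the order is the reflexive
transitive closure of the covering relation. -/
def RN : Frame where
  W := RNpt
  le a b := Relation.ReflTransGen rnCov a b
  refl _ := Relation.ReflTransGen.refl
  trans _ _ _ h1 h2 := h1.trans h2
  antisymm _ _ h1 h2 := rnIdx_inj (le_antisymm (rnLe_idx h2) (rnLe_idx h1))

/-! ## Combs -/

def combLe (n : ℕ) : (Fin n ⊕ Fin n) → (Fin n ⊕ Fin n) → Prop
  | .inl i, .inl j => i ≤ j
  | .inl i, .inr j => i ≤ j
  | .inr i, .inr j => i = j
  | .inr _, .inl _ => False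

/-- The `n`-comb: base points `x_1 ≤ … ≤ x_n` (encoded `inl 0, …, inl (n-1)`)
and maximal teeth `y_1, …, y_n` (encoded `inr 0, …, inr (n-1)`), with
`x_i ≤ y_j ↔ i ≤ j` and the teeth pairwise incomparable. -/
def Comb (n : ℕ) : Frame where
  W := Fin n ⊕ Fin n
  le := combLe n
  refl := by rintro (i | i) <;> simp [combLe]
  trans := by
    rintro (i | i) (j | j) (k | k) h1 h2 <;> simp only [combLe] at * <;>
      first
        | exact le_trans h1 h2
        | exact h2 ▸ h1
  antisymm := by
    rintro (i | i) (j | j) h1 h2 <;> simp only [combLe] at * <;>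
      first
        | exact congrArg Sum.inl (le_antisymm h1 h2)
        | exact congrArg Sum.inr h1

/-- A broken `m`-comb: (isomorphic to) a subposet of the `m`-comb containing
all of the base points `x_1, …, x_m`. -/
def IsBrokenComb (F : Frame) (m : ℕ) : Prop :=
  ∃ s : Set (Comb m).W, (∀ i : Fin m, Sum.inl i ∈ s) ∧
    FrameIso F ((Comb m).restrict s)

/-- The logic of the class of all combs. -/
def LFC : Set Form := LogK {F | ∃ n, F = Comb n}

/-! ## The stacked models `M_n^k` and `N_n^k` -/

/-- Height index of a point: layer `j` (from the top) has index `j`, the root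
(`none`) has index `k+1`. -/
def stackIdx (k : ℕ) : Option (Fin (k + 1) × Bool) → ℕ
  | none => k + 1
  | some (j, _) => j

/-- Size of the color (an initial segment of the variables): the left point
(`false`) of layer `j` gets `1^{n-j}0^j`, the right point (`true`) gets
`1^{n-j-1}0^{j+1}`, and the root gets `1^r0^{n-r}`. -/
def stackColSize (n k r : ℕ) : Option (Fin (k + 1) × Bool) → ℕ
  | none => r
  | some (j, false) => n - j
  | some (j, true) => n - ((j : ℕ) + 1)

private theorem stackColSize_le (n k r : ℕ) (hr : r ≤ n - (k + 1))
    {a b : Option (Fin (k + 1) × Bool)} (h : stackIdx k b < stackIdx k a) :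
    stackColSize n k r a ≤ stackColSize n k r b := by
  rcases a with _ | ⟨j, _ | _⟩ <;> rcases b with _ | ⟨j', _ | _⟩ <;>
    simp only [stackIdx, stackColSize] at * <;> omega

/-- The common shape of `M_n^k` and `N_n^k`, with root color `1^r0^{n-r}`:
`k+1` layers of two points stacked on top of a root. -/
def stackModel (n k r : ℕ) (hr : r ≤ n - (k + 1)) : Model n where
  W := Option (Fin (k + 1) × Bool)
  le a b := a = b ∨ stackIdx k b < stackIdx k a
  refl _ := Or.inl rfl
  trans := by
    rintro a b c (rfl | h1) h2
    · exact h2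
    · rcases h2 with rfl | h2
      · exact Or.inr h1
      · exact Or.inr (h2.trans h1)
  antisymm := by
    rintro a b (rfl | h1) h2
    · rfl
    · rcases h2 with rfl | h2
      · rfl
      · omega
  root := none
  rooted := by
    rintro (_ | ⟨j, s⟩)
    · exact Or.inl rfl
    · exact Or.inr j.isLt
  col a := {i : Fin n | (i : ℕ) < stackColSize n k r a}
  mono := by
    rintro a b (rfl | h) i hi
    · exact hi
    · exact lt_of_lt_of_le hi (stackColSize_le n k r hr h)

/-- The model `M_n^k` (root color `1^{n-k-1}0^{k+1}`). -/
def Mmodel (n k : ℕ) : Model n := stackModel n k (n - (k + 1)) le_rfl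

/-- The model `N_n^k` (root color `1^{n-k-2}0^{k+2}`). -/
def Nmodel (n k : ℕ) : Model n := stackModel n k (n - (k + 2)) (by omega)

/-! ## The frames `S_n` -/

/-- Height index in `S_n`: the top point (`some none`) has index `0`, the two
points of the `j`-th middle layer have index `j+1`, and the root (`none`) has
index `n`. -/
def sIdx (n : ℕ) : Option (Option (Fin (n - 1) × Bool)) → ℕ
  | none => n
  | some none => 0
  | some (some (j, _)) => (j : ℕ) + 1

/-- The frame `S_n` (for `n ≥ 2`): the Boolean sum whose layers from top to
bottom have sizes `1, 2, …, 2, 1` (with `n - 1` layers of size `2`). -/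
def SFrame (n : ℕ) : Frame where
  W := Option (Option (Fin (n - 1) × Bool))
  le a b := a = b ∨ sIdx n b < sIdx n a
  refl _ := Or.inl rfl
  trans := by
    rintro a b c (rfl | h1) h2
    · exact h2
    · rcases h2 with rfl | h2
      · exact Or.inr h1
      · exact Or.inr (h2.trans h1)
  antisymm := by
    rintro a b (rfl | h1) h2
    · rfl
    · rcases h2 with rfl | h2
      · rfl
      · omega


/-! ### Auxiliary development for Statement 16 -/

open Classical

namespace S16

/-! #### Basic Kripke semantics lemmas -/

theorem force_mono {F : Frame} {V : ℕ → F.W → Prop} (hV : F.Persistent V)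
    (φ : Form) {a b : F.W} (h : F.le a b) :
    F.force V φ a → F.force V φ b := by
  induction φ generalizing a b with
  | var p => exact fun hf => hV p a b h hf
  | bot => exact id
  | top => exact id
  | and φ ψ ihφ ihψ => exact fun hf => ⟨ihφ h hf.1, ihψ h hf.2⟩
  | or φ ψ ihφ ihψ =>
      rintro (h1 | h1)
      · exact Or.inl (ihφ h h1)
      · exact Or.inr (ihψ h h1)
  | imp φ ψ ihφ ihψ =>
      exact fun hf v hv hφ => hf v (F.trans a b v h hv) hφ

theorem IPC_valid {φ : Form} (h : IPC φ) (F : Frame) : F.Valid φ := by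
  induction h with
  | ax1 φ ψ =>
      intro V hV w v hv hφ u hu _
      exact force_mono hV φ hu hφ
  | ax2 φ ψ χ =>
      intro V hV w a ha H1 b hb H2 c hc hφ
      exact H1 c (F.trans a b c hb hc) hφ c (F.refl c) (H2 c hc hφ)
  | andE1 φ ψ =>
      intro V hV w v hv hf; exact hf.1
  | andE2 φ ψ =>
      intro V hV w v hv hf; exact hf.2
  | andI φ ψ =>
      intro V hV w a ha hφ b hb hψ
      exact ⟨force_mono hV φ hb hφ, hψ⟩
  | orI1 φ ψ =>
      intro V hV w v hv hf; exact Or.inl hf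
  | orI2 φ ψ =>
      intro V hV w v hv hf; exact Or.inr hf
  | orE φ ψ χ =>
      intro V hV w a ha H1 b hb H2 c hc hor
      rcases hor with h1 | h1
      · exact H1 c (F.trans a b c hb hc) h1
      · exact H2 c hc h1
  | botE φ =>
      intro V hV w v hv hf; exact hf.elim
  | topI =>
      intro V hV w; trivial
  | mp φ ψ h1 h2 ih1 ih2 =>
      intro V hV w
      exact ih1 V hV w w (F.refl w) (ih2 V hV w)

theorem force_subst {F : Frame} {V : ℕ → F.W → Prop} (σ : ℕ → Form)
    (φ : Form) (w : F.W) :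
    F.force V (φ.subst σ) w ↔ F.force (fun p x => F.force V (σ p) x) φ w := by
  induction φ generalizing w with
  | var p => exact Iff.rfl
  | bot => exact Iff.rfl
  | top => exact Iff.rfl
  | and φ ψ ihφ ihψ => exact and_congr (ihφ w) (ihψ w)
  | or φ ψ ihφ ihψ => exact or_congr (ihφ w) (ihψ w)
  | imp φ ψ ihφ ihψ =>
      constructor
      · intro hf v hv hφ
        exact (ihψ v).1 (hf v hv ((ihφ v).2 hφ))
      · intro hf v hv hφ
        exact (ihψ v).2 (hf v hv ((ihφ v).1 hφ))

theorem valid_subst {F : Frame} {φ : Form} (h : F.Valid φ) (σ : ℕ → Form) :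
    F.Valid (φ.subst σ) := by
  intro V hV w
  have hV' : F.Persistent (fun p x => F.force V (σ p) x) := by
    intro p a b hab hf
    exact force_mono hV (σ p) hab hf
  exact (force_subst σ φ w).2 (h _ hV' w)

theorem isSILogic_LogK (K : Set Frame) : IsSILogic (LogK K) := by
  refine ⟨?_, ?_, ?_⟩
  · intro φ hφ F hF
    exact IPC_valid hφ F
  · intro φ ψ h1 h2 F hF V hV w
    exact h1 F hF V hV w w (F.refl w) (h2 F hF V hV w)
  · intro φ σ h F hF
    exact valid_subst (h F hF) σ

/-! #### The structure of `SFrame n` -/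

theorem sframe_le {n : ℕ} (a b : (SFrame n).W) :
    (SFrame n).le a b ↔ a = b ∨ sIdx n b < sIdx n a := Iff.rfl

theorem sframe_incomp {n : ℕ} {a b : (SFrame n).W}
    (h1 : ¬ (SFrame n).le a b) (h2 : ¬ (SFrame n).le b a) :
    sIdx n a = sIdx n b := by
  rw [sframe_le] at h1 h2
  push_neg at h1 h2
  omega

theorem sframe_same_idx {n : ℕ} (hn : 2 ≤ n) {a b : (SFrame n).W}
    (h : sIdx n a = sIdx n b) (hne : a ≠ b) :
    ∃ j s, a = some (some (j, s)) ∧ b = some (some (j, !s)) := by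
  rcases a with _ | (_ | ⟨ja, sa⟩) <;> rcases b with _ | (_ | ⟨jb, sb⟩) <;>
      simp only [sIdx] at h
  · exact absurd rfl hne
  · omega
  · exact absurd (by have := jb.isLt; omega : False) id
  · omega
  · exact absurd rfl hne
  · omega
  · exact absurd (by have := ja.isLt; omega : False) id
  · omega
  · have hj : ja = jb := Fin.ext (by omega)
    subst hj
    rcases hsa : sa <;> rcases hsb : sb
    · exact absurd (by rw [hsa, hsb]) hne
    · exact ⟨ja, false, rfl, rfl⟩
    · exact ⟨ja, true, rfl, rfl⟩
    · exact absurd (by rw [hsa, hsb]) hne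

theorem sframe_no3 {n : ℕ} (hn : 2 ≤ n) (a b c : (SFrame n).W)
    (hab : a ≠ b) (hbc : b ≠ c) (hac : a ≠ c)
    (h1 : sIdx n a = sIdx n b) (h2 : sIdx n b = sIdx n c) : False := by
  obtain ⟨j, s, ha, hb⟩ := sframe_same_idx hn h1 hab
  obtain ⟨j', s', hb', hc⟩ := sframe_same_idx hn h2 hbc
  rw [hb] at hb'
  have hj : j' = j := by
    have := congrArg (fun x => sIdx n x) hb'
    simp only [sIdx] at this
    exact Fin.ext (by omega)
  subst hj
  have hs : s' = !s := by
    cases s <;> cases s' <;> simp_all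
  apply hac
  rw [ha, hc, hs]
  cases s <;> rfl

theorem sframe_top_le {n : ℕ} (hn : 2 ≤ n) (w : (SFrame n).W) :
    (SFrame n).le w (some none) := by
  rcases w with _ | (_ | ⟨j, s⟩)
  · exact Or.inr (by simp [sIdx]; omega)
  · exact Or.inl rfl
  · exact Or.inr (by simp [sIdx])

theorem kcax_valid {n : ℕ} (hn : 2 ≤ n) : (SFrame n).Valid kcax := by
  intro V hV w
  show (SFrame n).force V (Form.neg (.var 0)) w ∨
    (SFrame n).force V (Form.neg (Form.neg (.var 0))) w
  by_cases ht : V 0 (some none)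
  · right
    intro v hv hneg
    exact hneg (some none) (sframe_top_le hn v) ht
  · left
    intro v hv h0
    exact ht (hV 0 v (some none) (sframe_top_le hn v) h0)

theorem bw2ax_valid {n : ℕ} (hn : 2 ≤ n) : (SFrame n).Valid bw2ax := by
  intro V hV w
  by_contra hc
  have h0 : ¬ (SFrame n).force V (.imp (.var 0) (.or (.var 1) (.var 2))) w := by
    intro h; exact hc (Or.inl h)
  have h1 : ¬ (SFrame n).force V (.imp (.var 1) (.or (.var 0) (.var 2))) w := by
    intro h; exact hc (Or.inr (Or.inl h))
  have h2 : ¬ (SFrame n).force V (.imp (.var 2) (.or (.var 0) (.var 1))) w := by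
    intro h; exact hc (Or.inr (Or.inr h))
  simp only [Frame.force, not_forall] at h0 h1 h2
  obtain ⟨v0, hv0, V0, hno0⟩ := h0
  obtain ⟨v1, hv1, V1, hno1⟩ := h1
  obtain ⟨v2, hv2, V2, hno2⟩ := h2
  push_neg at hno0 hno1 hno2
  have l01 : ¬ (SFrame n).le v0 v1 := fun h => hno1.1 (hV 0 v0 v1 h V0)
  have l10 : ¬ (SFrame n).le v1 v0 := fun h => hno0.1 (hV 1 v1 v0 h V1)
  have l02 : ¬ (SFrame n).le v0 v2 := fun h => hno2.1 (hV 0 v0 v2 h V0)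
  have l20 : ¬ (SFrame n).le v2 v0 := fun h => hno0.2 (hV 2 v2 v0 h V2)
  have l12 : ¬ (SFrame n).le v1 v2 := fun h => hno2.2 (hV 1 v1 v2 h V1)
  have l21 : ¬ (SFrame n).le v2 v1 := fun h => hno1.2 (hV 2 v2 v1 h V2)
  have e01 := sframe_incomp l01 l10
  have e12 := sframe_incomp l12 l21
  have ne01 : v0 ≠ v1 := fun h => l01 (h ▸ Or.inl rfl)
  have ne12 : v1 ≠ v2 := fun h => l12 (h ▸ Or.inl rfl)
  have ne02 : v0 ≠ v2 := fun h => l02 (h ▸ Or.inl rfl)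
  exact sframe_no3 hn v0 v1 v2 ne01 ne12 ne02 e01 e12

theorem wPLax_valid {n : ℕ} (hn : 2 ≤ n) : (SFrame n).Valid wPLax := by
  intro V hV w
  by_contra hc
  have hd1 : ¬ (SFrame n).force V (.imp (.var 1) (.var 0)) w := by
    intro h; exact hc (Or.inl h)
  have hd2 : ¬ (SFrame n).force V
      (.imp (.imp (.imp (.var 0) (.var 1)) (.var 0)) (.var 0)) w := by
    intro h; exact hc (Or.inr h)
  simp only [Frame.force, not_forall] at hd1 hd2
  obtain ⟨v, hwv, hV1v, hV0v⟩ := hd1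
  obtain ⟨u, hwu, Hu, hV0u⟩ := hd2
  -- `(p → q) → p` holds at `u`, `p` fails at `u`.
  have hnpq_u : ¬ (SFrame n).force V (.imp (.var 0) (.var 1)) u := by
    intro h; exact hV0u (Hu u ((SFrame n).refl u) h)
  simp only [Frame.force, not_forall] at hnpq_u
  obtain ⟨z, huz, hV0z, hV1z⟩ := hnpq_u
  have hzu : z ≠ u := fun h => hV0u (h ▸ hV0z)
  have hidxzu : sIdx n z < sIdx n u := by
    rcases huz with h | h
    · exact absurd h.symm hzu
    · exact h
  have lvz : ¬ (SFrame n).le v z := fun h => hV1z (hV 1 v z h hV1v)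
  have lzv : ¬ (SFrame n).le z v := fun h => hV0v (hV 0 z v h hV0z)
  have e : sIdx n v = sIdx n z := sframe_incomp lvz lzv
  have huv : (SFrame n).le u v := Or.inr (by omega)
  have : ¬ (SFrame n).force V (.imp (.var 0) (.var 1)) v := by
    intro h; exact hV0v (Hu v huv h)
  simp only [Frame.force, not_forall] at this
  obtain ⟨z', hvz', hV0z', hV1z'⟩ := this
  exact hV1z' (hV 1 v z' hvz' hV1v)

theorem wPLax_mem_wPL : wPLax ∈ wPL := by
  intro M hM
  exact hM.2.2 rfl

theorem soundness :
    BoxLogic ⊆ LogK {F | ∃ n, 2 ≤ n ∧ F = SFrame n} := by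
  apply Set.sInter_subset_of_mem
  refine ⟨isSILogic_LogK _, ?_, ?_⟩
  · -- wPL ⊆ LogK K
    apply Set.sInter_subset_of_mem
    refine ⟨isSILogic_LogK _, (isSILogic_LogK _).1, ?_⟩
    intro ψ hψ F hF
    obtain ⟨n, hn, rfl⟩ := hF
    rcases hψ with rfl
    exact wPLax_valid hn
  · intro ψ hψ F hF
    obtain ⟨n, hn, rfl⟩ := hF
    simp only [Set.mem_insert_iff, Set.mem_singleton_iff] at hψ
    rcases hψ with rfl | rfl
    · exact bw2ax_valid hn
    · exact kcax_valid hn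

/-! #### Hilbert-style provability over a superintuitionistic logic `M` -/

inductive Prov (M : Set Form) (Γ : Set Form) : Form → Prop
  | prem {φ} : φ ∈ Γ → Prov M Γ φ
  | ax {φ} : φ ∈ M → Prov M Γ φ
  | mp {φ ψ} : Prov M Γ (.imp φ ψ) → Prov M Γ φ → Prov M Γ ψ

theorem Prov.mono {M Γ Γ' : Set Form} (h : Γ ⊆ Γ') {φ : Form}
    (hp : Prov M Γ φ) : Prov M Γ' φ := by
  induction hp with
  | prem h1 => exact .prem (h h1)
  | ax h1 => exact .ax h1
  | mp _ _ ih1 ih2 => exact .mp ih1 ih2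

theorem Prov.finite {M Γ : Set Form} {φ : Form} (hp : Prov M Γ φ) :
    ∃ t : Finset Form, ↑t ⊆ Γ ∧ Prov M ↑t φ := by
  induction hp with
  | @prem φ h1 =>
      exact ⟨{φ}, by simpa using h1, .prem (by simp)⟩
  | ax h1 => exact ⟨∅, by simp, .ax h1⟩
  | mp _ _ ih1 ih2 =>
      obtain ⟨t1, ht1, hp1⟩ := ih1
      obtain ⟨t2, ht2, hp2⟩ := ih2
      refine ⟨t1 ∪ t2, ?_, .mp (hp1.mono ?_) (hp2.mono ?_)⟩
      · push_cast
        exact Set.union_subset ht1 ht2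
      · push_cast
        exact Set.subset_union_left
      · push_cast
        exact Set.subset_union_right

section WithM

variable {M : Set Form}

theorem Prov.axIPC (hIPC : IPCSet ⊆ M) {Γ : Set Form} {φ : Form} (h : IPC φ) : Prov M Γ φ :=
  .ax (hIPC h)

theorem Prov.imp_id (hIPC : IPCSet ⊆ M) (Γ : Set Form) (α : Form) : Prov M Γ (.imp α α) :=
  .mp (.mp (Prov.axIPC hIPC (IPC.ax2 α (.imp α α) α))
      (Prov.axIPC hIPC (IPC.ax1 α (.imp α α))))
    (Prov.axIPC hIPC (IPC.ax1 α α))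

theorem Prov.deduction (hIPC : IPCSet ⊆ M) {Γ : Set Form} {α β : Form}
    (h : Prov M (insert α Γ) β) : Prov M Γ (.imp α β) := by
  induction h with
  | @prem φ h1 =>
      rcases Set.mem_insert_iff.1 h1 with rfl | h1
      · exact Prov.imp_id hIPC Γ φ
      · exact .mp (Prov.axIPC hIPC (IPC.ax1 φ α)) (.prem h1)
  | @ax φ h1 => exact .mp (Prov.axIPC hIPC (IPC.ax1 φ α)) (.ax h1)
  | @mp φ ψ _ _ ih1 ih2 =>
      exact .mp (.mp (Prov.axIPC hIPC (IPC.ax2 α φ ψ)) ih1) ih2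

/-! #### Prime theories -/

/-- A prime `M`-theory. -/
def IsPrime (M T : Set Form) : Prop :=
  (∀ φ, Prov M T φ → φ ∈ T) ∧ Form.bot ∉ T ∧
    (∀ φ ψ, Form.or φ ψ ∈ T → φ ∈ T ∨ ψ ∈ T)

theorem IsPrime.superset {T : Set Form} (hT : IsPrime M T) : M ⊆ T :=
  fun _ h => hT.1 _ (.ax h)

theorem IsPrime.mp_mem {T : Set Form} (hT : IsPrime M T) {φ ψ : Form}
    (h1 : Form.imp φ ψ ∈ T) (h2 : φ ∈ T) : ψ ∈ T :=
  hT.1 _ (.mp (.prem h1) (.prem h2))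

theorem IsPrime.and_mem (hIPC : IPCSet ⊆ M) {T : Set Form} (hT : IsPrime M T) {φ ψ : Form} :
    Form.and φ ψ ∈ T ↔ φ ∈ T ∧ ψ ∈ T := by
  constructor
  · intro h
    exact ⟨hT.1 _ (.mp (Prov.axIPC hIPC (IPC.andE1 φ ψ)) (.prem h)),
      hT.1 _ (.mp (Prov.axIPC hIPC (IPC.andE2 φ ψ)) (.prem h))⟩
  · intro ⟨h1, h2⟩
    exact hT.1 _ (.mp (.mp (Prov.axIPC hIPC (IPC.andI φ ψ)) (.prem h1)) (.prem h2))

theorem IsPrime.or_mem_left (hIPC : IPCSet ⊆ M) {T : Set Form} (hT : IsPrime M T) {φ ψ : Form} (h : φ ∈ T) :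
    Form.or φ ψ ∈ T :=
  hT.1 _ (.mp (Prov.axIPC hIPC (IPC.orI1 φ ψ)) (.prem h))

theorem IsPrime.or_mem_right (hIPC : IPCSet ⊆ M) {T : Set Form} (hT : IsPrime M T) {φ ψ : Form} (h : ψ ∈ T) :
    Form.or φ ψ ∈ T :=
  hT.1 _ (.mp (Prov.axIPC hIPC (IPC.orI2 φ ψ)) (.prem h))

/-! #### Lindenbaum lemma via Zorn -/

theorem chain_finset_subset {c : Set (Set Form)} (hc : IsChain (· ⊆ ·) c)
    (hne : c.Nonempty) (t : Finset Form) (ht : ↑t ⊆ ⋃₀ c) :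
    ∃ s ∈ c, ↑t ⊆ s := by
  induction t using Finset.induction with
  | empty => exact ⟨hne.choose, hne.choose_spec, by simp⟩
  | @insert a t ha ih =>
      have ht' : ↑t ⊆ ⋃₀ c := by
        refine subset_trans ?_ ht
        push_cast
        exact Set.subset_insert _ _
      obtain ⟨s1, hs1, hts1⟩ := ih ht'
      have hat : a ∈ ⋃₀ c := ht (by simp)
      obtain ⟨s2, hs2, has2⟩ := hat
      rcases eq_or_ne s1 s2 with rfl | hne12
      · refine ⟨s1, hs1, ?_⟩
        push_cast
        exact Set.insert_subset has2 hts1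
      · rcases hc hs1 hs2 hne12 with h | h
        · refine ⟨s2, hs2, ?_⟩
          push_cast
          exact Set.insert_subset has2 (hts1.trans h)
        · refine ⟨s1, hs1, ?_⟩
          push_cast
          exact Set.insert_subset (h has2) hts1

theorem lindenbaum (hIPC : IPCSet ⊆ M) {T0 : Set Form} {χ : Form} (h : ¬ Prov M T0 χ) :
    ∃ T, T0 ⊆ T ∧ IsPrime M T ∧ χ ∉ T := by
  set S : Set (Set Form) := {T | T0 ⊆ T ∧ ¬ Prov M T χ} with hS
  have hzorn : ∀ c ⊆ S, IsChain (· ⊆ ·) c → c.Nonempty →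
      ∃ ub ∈ S, ∀ s ∈ c, s ⊆ ub := by
    intro c hcS hchain hcne
    refine ⟨⋃₀ c, ⟨?_, ?_⟩, fun s hs => Set.subset_sUnion_of_mem hs⟩
    · obtain ⟨s, hs⟩ := hcne
      exact (hcS hs).1.trans (Set.subset_sUnion_of_mem hs)
    · intro hp
      obtain ⟨t, htc, htp⟩ := hp.finite
      obtain ⟨s, hsc, hts⟩ := chain_finset_subset hchain hcne t htc
      exact (hcS hsc).2 (htp.mono hts)
  obtain ⟨m, hm0, hmax⟩ := zorn_subset_nonempty S hzorn T0 ⟨subset_rfl, h⟩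
  have hmS : m ∈ S := hmax.1
  have hclosed : ∀ φ, Prov M m φ → φ ∈ m := by
    intro φ hp
    have h1 : insert φ m ∈ S := by
      refine ⟨hmS.1.trans (Set.subset_insert _ _), fun hq => hmS.2 ?_⟩
      exact .mp (Prov.deduction hIPC hq) hp
    exact hmax.2 h1 (Set.subset_insert _ _) (Set.mem_insert _ _)
  have hchi : χ ∉ m := fun hc => hmS.2 (.prem hc)
  refine ⟨m, hm0, ⟨hclosed, ?_, ?_⟩, hchi⟩
  · intro hbot
    exact hmS.2 (.mp (Prov.axIPC hIPC (IPC.botE χ)) (.prem hbot))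
  · intro φ ψ hor
    by_contra hcon
    push_neg at hcon
    have h1 : Prov M m (.imp φ χ) := by
      apply Prov.deduction hIPC
      by_contra hq
      have : insert φ m ∈ S :=
        ⟨hmS.1.trans (Set.subset_insert _ _), hq⟩
      exact hcon.1 (hmax.2 this (Set.subset_insert _ _) (Set.mem_insert _ _))
    have h2 : Prov M m (.imp ψ χ) := by
      apply Prov.deduction hIPC
      by_contra hq
      have : insert ψ m ∈ S :=
        ⟨hmS.1.trans (Set.subset_insert _ _), hq⟩
      exact hcon.2 (hmax.2 this (Set.subset_insert _ _) (Set.mem_insert _ _))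
    exact hmS.2 (.mp (.mp (.mp (Prov.axIPC hIPC (IPC.orE φ ψ χ)) h1) h2) (.prem hor))

/-- The key existence lemma: refuted implications have witnesses. -/
theorem exists_witness (hIPC : IPCSet ⊆ M) {T : Set Form} (hT : IsPrime M T) {γ δ : Form}
    (h : Form.imp γ δ ∉ T) :
    ∃ T', IsPrime M T' ∧ T ⊆ T' ∧ γ ∈ T' ∧ δ ∉ T' := by
  have h1 : ¬ Prov M (insert γ T) δ := by
    intro hp
    exact h (hT.1 _ (Prov.deduction hIPC hp))
  obtain ⟨T', hT0', hT', hd⟩ := lindenbaum hIPC h1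
  exact ⟨T', hT', (Set.subset_insert _ _).trans hT0', hT0' (Set.mem_insert _ _), hd⟩

theorem Prov.cut {Γ Γ' : Set Form} {φ : Form}
    (hγ : ∀ γ ∈ Γ, Prov M Γ' γ) (hp : Prov M Γ φ) : Prov M Γ' φ := by
  induction hp with
  | prem h1 => exact hγ _ h1
  | ax h1 => exact .ax h1
  | mp _ _ ih1 ih2 => exact .mp ih1 ih2

/-! #### Conjunctions of finite lists -/

def listConj (l : List Form) : Form := l.foldr .and .top

theorem listConj_elim (hIPC : IPCSet ⊆ M) {Γ : Set Form} {l : List Form}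
    (h : Prov M Γ (listConj l)) : ∀ φ ∈ l, Prov M Γ φ := by
  induction l with
  | nil => intro φ hφ; exact absurd hφ List.not_mem_nil
  | cons ψ l ih =>
      intro φ hφ
      rcases List.mem_cons.1 hφ with rfl | hφ
      · exact .mp (Prov.axIPC hIPC (IPC.andE1 φ (listConj l))) h
      · exact ih (.mp (Prov.axIPC hIPC (IPC.andE2 ψ (listConj l))) h) φ hφ

theorem listConj_mem (hIPC : IPCSet ⊆ M) {T : Set Form} (hT : IsPrime M T)
    {l : List Form} (h : ∀ φ ∈ l, φ ∈ T) : listConj l ∈ T := by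
  induction l with
  | nil => exact hT.1 _ (Prov.axIPC hIPC IPC.topI)
  | cons ψ l ih =>
      refine (IsPrime.and_mem hIPC hT).2 ⟨h ψ (by simp), ih ?_⟩
      intro φ hφ
      exact h φ (by simp [hφ])

/-! #### Substitution instances of the three axioms -/

def subst2 (P Q : Form) : ℕ → Form :=
  fun n => if n = 0 then P else if n = 1 then Q else .var n

def subst3 (P Q R : Form) : ℕ → Form :=
  fun n => if n = 0 then P else if n = 1 then Q else if n = 2 then R else .var n

theorem wPL_inst (hM : IsSILogic M) (hw : wPLax ∈ M) (P Q : Form) :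
    Form.or (.imp Q P) (.imp (.imp (.imp P Q) P) P) ∈ M := by
  have := hM.2.2 wPLax (subst2 P Q) hw
  simpa [wPLax, Form.subst, subst2] using this

theorem bw2_inst (hM : IsSILogic M) (hw : bw2ax ∈ M) (P Q R : Form) :
    Form.or (.imp P (.or Q R))
      (.or (.imp Q (.or P R)) (.imp R (.or P Q))) ∈ M := by
  have := hM.2.2 bw2ax (subst3 P Q R) hw
  simpa [bw2ax, Form.subst, subst3] using this

theorem kc_inst (hM : IsSILogic M) (hk : kcax ∈ M) (P : Form) :
    Form.or (.imp P .bot) (.imp (.imp P .bot) .bot) ∈ M := by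
  have := hM.2.2 kcax (subst2 P P) hk
  simpa [kcax, Form.neg, Form.subst, subst2] using this

/-! #### Canonical structure: width ≤ 2, directedness, and the tower property -/

/-- No three pairwise incomparable prime theories over a prime base (from `bw₂`). -/
theorem width2 (hM : IsSILogic M) (hw : bw2ax ∈ M)
    {x0 a b c : Set Form} (hx0 : IsPrime M x0)
    (ha : IsPrime M a) (hb : IsPrime M b) (hc : IsPrime M c)
    (hxa : x0 ⊆ a) (hxb : x0 ⊆ b) (hxc : x0 ⊆ c)
    (hab : ¬ a ⊆ b) (hba : ¬ b ⊆ a) (hbc : ¬ b ⊆ c) (hcb : ¬ c ⊆ b)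
    (hac : ¬ a ⊆ c) (hca : ¬ c ⊆ a) : False := by
  have hIPC : IPCSet ⊆ M := hM.1
  obtain ⟨A1, hA1a, hA1b⟩ := Set.not_subset.1 hab
  obtain ⟨A2, hA2a, hA2c⟩ := Set.not_subset.1 hac
  obtain ⟨B1, hB1b, hB1a⟩ := Set.not_subset.1 hba
  obtain ⟨B2, hB2b, hB2c⟩ := Set.not_subset.1 hbc
  obtain ⟨C1, hC1c, hC1a⟩ := Set.not_subset.1 hca
  obtain ⟨C2, hC2c, hC2b⟩ := Set.not_subset.1 hcb
  set A := Form.and A1 A2 with hA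
  set B := Form.and B1 B2 with hB
  set C := Form.and C1 C2 with hC
  have hAa : A ∈ a := (IsPrime.and_mem hIPC ha).2 ⟨hA1a, hA2a⟩
  have hBb : B ∈ b := (IsPrime.and_mem hIPC hb).2 ⟨hB1b, hB2b⟩
  have hCc : C ∈ c := (IsPrime.and_mem hIPC hc).2 ⟨hC1c, hC2c⟩
  have hAb : A ∉ b := fun h => hA1b ((IsPrime.and_mem hIPC hb).1 h).1
  have hAc : A ∉ c := fun h => hA2c ((IsPrime.and_mem hIPC hc).1 h).2
  have hBa : B ∉ a := fun h => hB1a ((IsPrime.and_mem hIPC ha).1 h).1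
  have hBc : B ∉ c := fun h => hB2c ((IsPrime.and_mem hIPC hc).1 h).2
  have hCa : C ∉ a := fun h => hC1a ((IsPrime.and_mem hIPC ha).1 h).1
  have hCb : C ∉ b := fun h => hC2b ((IsPrime.and_mem hIPC hb).1 h).2
  have hinst := hx0.superset (bw2_inst hM hw A B C)
  rcases hx0.2.2 _ _ hinst with h1 | h1
  · have := ha.mp_mem (hxa h1) hAa
    rcases ha.2.2 _ _ this with h2 | h2
    · exact hBa h2
    · exact hCa h2
  · rcases hx0.2.2 _ _ h1 with h2 | h2
    · have := hb.mp_mem (hxb h2) hBb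
      rcases hb.2.2 _ _ this with h3 | h3
      · exact hAb h3
      · exact hCb h3
    · have := hc.mp_mem (hxc h2) hCc
      rcases hc.2.2 _ _ this with h3 | h3
      · exact hAc h3
      · exact hBc h3

/-- Directedness of the primes over a prime base (from `¬p ∨ ¬¬p`). -/
theorem directed (hM : IsSILogic M) (hk : kcax ∈ M)
    {x0 a b : Set Form} (hx0 : IsPrime M x0)
    (ha : IsPrime M a) (hb : IsPrime M b) (hxa : x0 ⊆ a) (hxb : x0 ⊆ b) :
    ∃ c, IsPrime M c ∧ a ⊆ c ∧ b ⊆ c := by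
  have hIPC : IPCSet ⊆ M := hM.1
  have hcons : ¬ Prov M (a ∪ b) .bot := by
    intro hp
    obtain ⟨t, htab, htp⟩ := hp.finite
    set la : List Form := t.toList.filter (fun φ => decide (φ ∈ a)) with hla
    set lb : List Form := t.toList.filter (fun φ => decide (φ ∉ a)) with hlb
    set A := listConj la with hA2
    set B := listConj lb with hB2
    have hAa : A ∈ a := by
      refine listConj_mem hIPC ha ?_
      intro φ hφ
      have := List.of_mem_filter hφ
      simpa using this
    have hBb : B ∈ b := by
      refine listConj_mem hIPC hb ?_
      intro φ hφ
      have h1 := List.of_mem_filter hφ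
      have h2 : φ ∈ (↑t : Set Form) := by
        simpa using List.mem_of_mem_filter hφ
      rcases htab h2 with h3 | h3
      · simp at h1; exact absurd h3 h1
      · exact h3
    have hprov : Prov M (insert B {A}) .bot := by
      refine Prov.cut ?_ htp
      intro γ hγ
      have hγt : γ ∈ t.toList := by simpa using hγ
      by_cases hγa : γ ∈ a
      · refine listConj_elim hIPC (l := la)
          (.prem (show A ∈ insert B {A} by simp)) γ ?_
        exact List.mem_filter.2 ⟨hγt, by simpa using hγa⟩
      · refine listConj_elim hIPC (l := lb)
          (.prem (show B ∈ insert B {A} by simp)) γ ?_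
        exact List.mem_filter.2 ⟨hγt, by simpa using hγa⟩
    have hded : Prov M {A} (.imp B .bot) := Prov.deduction hIPC hprov
    have hBbot : Form.imp B .bot ∈ a :=
      ha.1 _ (hded.mono (by simp [hAa, Set.singleton_subset_iff]))
    have hinst := hx0.superset (kc_inst hM hk B)
    rcases hx0.2.2 _ _ hinst with h1 | h1
    · exact hb.2.1 (hb.mp_mem (hxb h1) hBb)
    · exact ha.2.1 (ha.mp_mem (hxa h1) hBbot)
  obtain ⟨T, hsub, hT, _⟩ := lindenbaum hIPC hcons
  exact ⟨T, hT, (Set.subset_union_left).trans hsub, (Set.subset_union_right).trans hsub⟩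

/-- The tower property `P*` (from the weak Peirce law): if `u ⊊ z` and `z ∥ v`
then `u ⊆ v`. -/
theorem pstar (hM : IsSILogic M) (hw : wPLax ∈ M) (hw2 : bw2ax ∈ M)
    {x0 u z v : Set Form} (hx0 : IsPrime M x0)
    (hu : IsPrime M u) (hz : IsPrime M z) (hv : IsPrime M v)
    (hxu : x0 ⊆ u) (hxz : x0 ⊆ z) (hxv : x0 ⊆ v)
    (huz : u ⊆ z) (hzu : ¬ z ⊆ u) (hzv : ¬ z ⊆ v) (hvz : ¬ v ⊆ z) :
    u ⊆ v := by
  have hIPC : IPCSet ⊆ M := hM.1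
  by_contra huv
  obtain ⟨A, hAu, hAv⟩ := Set.not_subset.1 huv
  obtain ⟨B, hBv, hBz⟩ := Set.not_subset.1 hvz
  obtain ⟨C, hCz, hCu⟩ := Set.not_subset.1 hzu
  obtain ⟨D, hDz, hDv⟩ := Set.not_subset.1 hzv
  set P := Form.or (.and C D) (.and B A) with hP
  have hPz : P ∈ z := (IsPrime.or_mem_left hIPC hz)
    ((IsPrime.and_mem hIPC hz).2 ⟨hCz, hDz⟩)
  have hPv : P ∉ v := by
    intro h
    rcases hv.2.2 _ _ h with h1 | h1
    · exact hDv ((IsPrime.and_mem hIPC hv).1 h1).2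
    · exact hAv ((IsPrime.and_mem hIPC hv).1 h1).2
  have hPu : P ∉ u := by
    intro h
    rcases hu.2.2 _ _ h with h1 | h1
    · exact hCu ((IsPrime.and_mem hIPC hu).1 h1).1
    · exact hBz (huz ((IsPrime.and_mem hIPC hu).1 h1).1)
  have hinst := hx0.superset (wPL_inst hM hw P B)
  rcases hx0.2.2 _ _ hinst with h1 | h1
  · exact hPv (hv.mp_mem (hxv h1) hBv)
  · -- `((P → B) → P) → P ∈ u`, so `(P → B) → P ∉ u`
    have hWu : Form.imp (.imp (.imp P B) P) P ∈ u := hxu h1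
    have hnpu : Form.imp (.imp P B) P ∉ u := fun h => hPu (hu.mp_mem hWu h)
    obtain ⟨s, hs, hus, hPBs, hPs⟩ := exists_witness hIPC hu hnpu
    have hAs : A ∈ s := hus hAu
    have hBs : B ∉ s := fun h =>
      hPs ((IsPrime.or_mem_right hIPC hs) ((IsPrime.and_mem hIPC hs).2 ⟨h, hAs⟩))
    have hzs : ¬ z ⊆ s := fun h =>
      hPs ((IsPrime.or_mem_left hIPC hs)
        ((IsPrime.and_mem hIPC hs).2 ⟨h hCz, h hDz⟩))
    have hsv : ¬ s ⊆ v := fun h => hAv (h hAs)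
    have hvs : ¬ v ⊆ s := fun h => hBs (h hBv)
    have hsz : s ⊆ z := by
      by_contra hsz
      exact width2 hM hw2 hx0 hs hz hv (hxu.trans hus) hxz hxv
        hsz hzs hzv hvz hsv hvs
    have hPBz : Form.imp P B ∈ z := hsz hPBs
    exact hBz (hz.mp_mem hPBz hPz)

theorem imp_notmem_right (hIPC : IPCSet ⊆ M) {y : Set Form} (hy : IsPrime M y)
    {γ δ : Form} (h : Form.imp γ δ ∉ y) : δ ∉ y :=
  fun hδ => h (hy.1 _ (.mp (Prov.axIPC hIPC (IPC.ax1 δ γ)) (.prem hδ)))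

/-! #### Witness closure -/

attribute [local instance] Classical.propDecidable

/-- The trace of a theory on a finite set of formulas. -/
noncomputable def trace (Sg : Finset Form) (T : Set Form) : Finset Form :=
  Sg.filter (fun ψ => ψ ∈ T)

theorem trace_mono (Sg : Finset Form) {T T' : Set Form} (h : T ⊆ T') :
    trace Sg T ⊆ trace Sg T' := by
  intro ψ hψ
  rw [trace, Finset.mem_filter] at hψ ⊢
  exact ⟨hψ.1, h hψ.2⟩

theorem mem_trace {Sg : Finset Form} {T : Set Form} {ψ : Form} :
    ψ ∈ trace Sg T ↔ ψ ∈ Sg ∧ ψ ∈ T := Finset.mem_filter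

theorem witness_closure (hIPC : IPCSet ⊆ M) (Sg : Finset Form)
    (hcl : ∀ γ δ : Form, Form.imp γ δ ∈ Sg → γ ∈ Sg ∧ δ ∈ Sg) :
    ∀ (N : ℕ) (z : Set Form), IsPrime M z → (Sg \ trace Sg z).card ≤ N →
    ∃ S : Set (Set Form), S.Finite ∧ z ∈ S ∧
      (∀ y ∈ S, IsPrime M y ∧ z ⊆ y) ∧
      (∀ y ∈ S, ∀ γ δ : Form, Form.imp γ δ ∈ Sg → Form.imp γ δ ∉ y → γ ∉ y →
        ∃ y' ∈ S, y ⊆ y' ∧ γ ∈ y' ∧ δ ∉ y') := by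
  intro N
  induction N with
  | zero =>
      intro z hz hcard
      refine ⟨{z}, Set.finite_singleton z, rfl, ?_, ?_⟩
      · intro y hy
        rw [Set.mem_singleton_iff] at hy
        subst hy
        exact ⟨hz, subset_rfl⟩
      · intro y hy γ δ hγδ hny hγy
        exfalso
        rw [Set.mem_singleton_iff] at hy
        rw [hy] at hγy
        have : γ ∈ Sg \ trace Sg z := by
          rw [Finset.mem_sdiff, mem_trace]
          exact ⟨(hcl γ δ hγδ).1, fun h => hγy h.2⟩
        have := Finset.card_pos.2 ⟨γ, this⟩
        omega
  | succ N ih =>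
      intro z hz hcard
      -- the defects of `z`
      set P : Form × Form → Prop := fun p =>
        Form.imp p.1 p.2 ∈ Sg ∧ Form.imp p.1 p.2 ∉ z ∧ p.1 ∉ z with hPdef
      have key : ∀ p : Form × Form, ∃ Sp : Set (Set Form), Sp.Finite ∧
          (P p → (∀ y ∈ Sp, IsPrime M y ∧ z ⊆ y) ∧
            (∃ w ∈ Sp, p.1 ∈ w ∧ p.2 ∉ w) ∧
            (∀ y ∈ Sp, ∀ γ δ : Form, Form.imp γ δ ∈ Sg → Form.imp γ δ ∉ y →
              γ ∉ y → ∃ y' ∈ Sp, y ⊆ y' ∧ γ ∈ y' ∧ δ ∉ y')) := by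
        intro p
        by_cases hp : P p
        · obtain ⟨w, hw, hzw, hγw, hδw⟩ := exists_witness hIPC hz hp.2.1
          have htr : (Sg \ trace Sg w).card ≤ N := by
            have hss : Sg \ trace Sg w ⊂ Sg \ trace Sg z := by
              constructor
              · intro ψ hψ
                rw [Finset.mem_sdiff] at hψ ⊢
                exact ⟨hψ.1, fun h => hψ.2 (trace_mono Sg hzw h)⟩
              · intro hsub
                have h1 : p.1 ∈ Sg \ trace Sg z := by
                  rw [Finset.mem_sdiff, mem_trace]
                  exact ⟨(hcl _ _ hp.1).1, fun h => hp.2.2 h.2⟩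
                have h2 := hsub h1
                rw [Finset.mem_sdiff, mem_trace] at h2
                exact h2.2 ⟨(hcl _ _ hp.1).1, hγw⟩
            have := Finset.card_lt_card hss
            omega
          obtain ⟨Sp, hfin, hwSp, hSp, hclSp⟩ := ih w hw htr
          refine ⟨Sp, hfin, fun _ => ⟨?_, ⟨w, hwSp, hγw, hδw⟩, hclSp⟩⟩
          intro y hy
          exact ⟨(hSp y hy).1, hzw.trans (hSp y hy).2⟩
        · exact ⟨∅, Set.finite_empty, fun h => absurd h hp⟩
      choose F hFfin hFP using key
      have hidxfin : {p : Form × Form | P p}.Finite := by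
        apply Set.Finite.subset (Finset.finite_toSet (Sg ×ˢ Sg))
        intro p hp
        simp only [Finset.coe_product, Set.mem_prod, Finset.mem_coe]
        exact ⟨(hcl _ _ hp.1).1, (hcl _ _ hp.1).2⟩
      refine ⟨insert z (⋃ p ∈ {p : Form × Form | P p}, F p), ?_,
        Set.mem_insert _ _, ?_, ?_⟩
      · exact Set.Finite.insert z (Set.Finite.biUnion hidxfin (fun p _ => hFfin p))
      · rintro y hy
        rcases Set.mem_insert_iff.1 hy with rfl | hy
        · exact ⟨hz, subset_rfl⟩
        · simp only [Set.mem_iUnion] at hy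
          obtain ⟨p, hp, hyp⟩ := hy
          exact (hFP p hp).1 y hyp
      · rintro y hy γ δ hgd hny hγy
        rcases Set.mem_insert_iff.1 hy with rfl | hy
        · have hp : P (γ, δ) := ⟨hgd, hny, hγy⟩
          obtain ⟨w, hwF, hγw, hδw⟩ := (hFP (γ, δ) hp).2.1
          refine ⟨w, ?_, ((hFP (γ, δ) hp).1 w hwF).2, hγw, hδw⟩
          exact Set.mem_insert_of_mem _
            (Set.mem_biUnion (show (γ, δ) ∈ {p : Form × Form | P p} from hp) hwF)
        · simp only [Set.mem_iUnion] at hy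
          obtain ⟨p, hp, hyp⟩ := hy
          obtain ⟨y', hy', hsub, hγ', hδ'⟩ :=
            (hFP p hp).2.2 y hyp γ δ hgd hny hγy
          exact ⟨y', Set.mem_insert_of_mem _ (Set.mem_biUnion hp hy'),
            hsub, hγ', hδ'⟩

/-- A prime upper bound for a finite family of primes over a prime base. -/
theorem finite_join (hM : IsSILogic M) (hk : kcax ∈ M)
    {x0 : Set Form} (hx0 : IsPrime M x0) {S : Set (Set Form)} (hfin : S.Finite) :
    (∀ y ∈ S, IsPrime M y ∧ x0 ⊆ y) →
    ∃ c, IsPrime M c ∧ x0 ⊆ c ∧ ∀ y ∈ S, y ⊆ c := by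
  refine Set.Finite.induction_on
    (motive := fun S _ => (∀ y ∈ S, IsPrime M y ∧ x0 ⊆ y) →
      ∃ c, IsPrime M c ∧ x0 ⊆ c ∧ ∀ y ∈ S, y ⊆ c) S hfin ?_ ?_
  · intro _
    exact ⟨x0, hx0, subset_rfl, by simp⟩
  · intro a S ha hSfin ih hS
    obtain ⟨c, hc, hxc, hall⟩ := ih (fun y hy => hS y (Set.mem_insert_of_mem _ hy))
    obtain ⟨c', hc', hcc', hac'⟩ :=
      directed hM hk hx0 hc (hS a (Set.mem_insert _ _)).1 hxc
        (hS a (Set.mem_insert _ _)).2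
    refine ⟨c', hc', hxc.trans hcc', ?_⟩
    rintro y hy
    rcases Set.mem_insert_iff.1 hy with rfl | hy
    · exact hac'
    · exact (hall y hy).trans hcc'

/-- Σ-maximal prime extensions exist. -/
theorem exists_sigma_max (hIPC : IPCSet ⊆ M) (Sg : Finset Form)
    {t0 : Set Form} (ht0 : IsPrime M t0) :
    ∃ t, IsPrime M t ∧ t0 ⊆ t ∧
      ∀ t', IsPrime M t' → t ⊆ t' → trace Sg t' = trace Sg t := by
  set A : Set (Finset Form) :=
    {tr | ∃ y, IsPrime M y ∧ t0 ⊆ y ∧ tr = trace Sg y} with hA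
  have hAfin : A.Finite := by
    apply Set.Finite.subset (Finset.finite_toSet Sg.powerset)
    rintro tr ⟨y, _, _, rfl⟩
    simp only [Finset.mem_coe, Finset.mem_powerset]
    exact Finset.filter_subset _ _
  have hAne : A.Nonempty := ⟨trace Sg t0, t0, ht0, subset_rfl, rfl⟩
  obtain ⟨tr0, htr0, hmax⟩ := Set.Finite.exists_maximalFor id A hAfin hAne
  obtain ⟨t, ht, ht0t, rfl⟩ := htr0
  refine ⟨t, ht, ht0t, ?_⟩
  intro t' ht' htt'
  have h1 : trace Sg t' ∈ A := ⟨t', ht', ht0t.trans htt', rfl⟩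
  have h2 := hmax h1 (trace_mono Sg htt')
  exact le_antisymm h2 (trace_mono Sg htt')

/-! #### Subformulas -/

def subs : Form → List Form
  | .var p => [.var p]
  | .bot => [.bot]
  | .top => [.top]
  | .and φ ψ => .and φ ψ :: (subs φ ++ subs ψ)
  | .or φ ψ => .or φ ψ :: (subs φ ++ subs ψ)
  | .imp φ ψ => .imp φ ψ :: (subs φ ++ subs ψ)

theorem mem_subs_self (φ : Form) : φ ∈ subs φ := by
  cases φ <;> simp [subs]

theorem subs_and : ∀ (φ : Form) {α β : Form},
    Form.and α β ∈ subs φ → α ∈ subs φ ∧ β ∈ subs φ := by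
  intro φ
  induction φ with
  | var p => intro α β h; simp [subs] at h
  | bot => intro α β h; simp [subs] at h
  | top => intro α β h; simp [subs] at h
  | and φ1 φ2 ih1 ih2 =>
      intro α β h
      simp only [subs, List.mem_cons, List.mem_append, Form.and.injEq] at h ⊢
      rcases h with ⟨rfl, rfl⟩ | h | h
      · exact ⟨Or.inr (Or.inl (mem_subs_self _)), Or.inr (Or.inr (mem_subs_self _))⟩
      · exact ⟨Or.inr (Or.inl (ih1 h).1), Or.inr (Or.inl (ih1 h).2)⟩
      · exact ⟨Or.inr (Or.inr (ih2 h).1), Or.inr (Or.inr (ih2 h).2)⟩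
  | or φ1 φ2 ih1 ih2 =>
      intro α β h
      simp only [subs, List.mem_cons, List.mem_append] at h ⊢
      rcases h with h | h | h
      · exact absurd h (by simp)
      · exact ⟨Or.inr (Or.inl (ih1 h).1), Or.inr (Or.inl (ih1 h).2)⟩
      · exact ⟨Or.inr (Or.inr (ih2 h).1), Or.inr (Or.inr (ih2 h).2)⟩
  | imp φ1 φ2 ih1 ih2 =>
      intro α β h
      simp only [subs, List.mem_cons, List.mem_append] at h ⊢
      rcases h with h | h | h
      · exact absurd h (by simp)
      · exact ⟨Or.inr (Or.inl (ih1 h).1), Or.inr (Or.inl (ih1 h).2)⟩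
      · exact ⟨Or.inr (Or.inr (ih2 h).1), Or.inr (Or.inr (ih2 h).2)⟩

theorem subs_or : ∀ (φ : Form) {α β : Form},
    Form.or α β ∈ subs φ → α ∈ subs φ ∧ β ∈ subs φ := by
  intro φ
  induction φ with
  | var p => intro α β h; simp [subs] at h
  | bot => intro α β h; simp [subs] at h
  | top => intro α β h; simp [subs] at h
  | and φ1 φ2 ih1 ih2 =>
      intro α β h
      simp only [subs, List.mem_cons, List.mem_append] at h ⊢
      rcases h with h | h | h
      · exact absurd h (by simp)
      · exact ⟨Or.inr (Or.inl (ih1 h).1), Or.inr (Or.inl (ih1 h).2)⟩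
      · exact ⟨Or.inr (Or.inr (ih2 h).1), Or.inr (Or.inr (ih2 h).2)⟩
  | or φ1 φ2 ih1 ih2 =>
      intro α β h
      simp only [subs, List.mem_cons, List.mem_append, Form.or.injEq] at h ⊢
      rcases h with ⟨rfl, rfl⟩ | h | h
      · exact ⟨Or.inr (Or.inl (mem_subs_self _)), Or.inr (Or.inr (mem_subs_self _))⟩
      · exact ⟨Or.inr (Or.inl (ih1 h).1), Or.inr (Or.inl (ih1 h).2)⟩
      · exact ⟨Or.inr (Or.inr (ih2 h).1), Or.inr (Or.inr (ih2 h).2)⟩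
  | imp φ1 φ2 ih1 ih2 =>
      intro α β h
      simp only [subs, List.mem_cons, List.mem_append] at h ⊢
      rcases h with h | h | h
      · exact absurd h (by simp)
      · exact ⟨Or.inr (Or.inl (ih1 h).1), Or.inr (Or.inl (ih1 h).2)⟩
      · exact ⟨Or.inr (Or.inr (ih2 h).1), Or.inr (Or.inr (ih2 h).2)⟩

theorem subs_imp : ∀ (φ : Form) {α β : Form},
    Form.imp α β ∈ subs φ → α ∈ subs φ ∧ β ∈ subs φ := by
  intro φ
  induction φ with
  | var p => intro α β h; simp [subs] at h
  | bot => intro α β h; simp [subs] at h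
  | top => intro α β h; simp [subs] at h
  | and φ1 φ2 ih1 ih2 =>
      intro α β h
      simp only [subs, List.mem_cons, List.mem_append] at h ⊢
      rcases h with h | h | h
      · exact absurd h (by simp)
      · exact ⟨Or.inr (Or.inl (ih1 h).1), Or.inr (Or.inl (ih1 h).2)⟩
      · exact ⟨Or.inr (Or.inr (ih2 h).1), Or.inr (Or.inr (ih2 h).2)⟩
  | or φ1 φ2 ih1 ih2 =>
      intro α β h
      simp only [subs, List.mem_cons, List.mem_append] at h ⊢
      rcases h with h | h | h
      · exact absurd h (by simp)
      · exact ⟨Or.inr (Or.inl (ih1 h).1), Or.inr (Or.inl (ih1 h).2)⟩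
      · exact ⟨Or.inr (Or.inr (ih2 h).1), Or.inr (Or.inr (ih2 h).2)⟩
  | imp φ1 φ2 ih1 ih2 =>
      intro α β h
      simp only [subs, List.mem_cons, List.mem_append, Form.imp.injEq] at h ⊢
      rcases h with ⟨rfl, rfl⟩ | h | h
      · exact ⟨Or.inr (Or.inl (mem_subs_self _)), Or.inr (Or.inr (mem_subs_self _))⟩
      · exact ⟨Or.inr (Or.inl (ih1 h).1), Or.inr (Or.inl (ih1 h).2)⟩
      · exact ⟨Or.inr (Or.inr (ih2 h).1), Or.inr (Or.inr (ih2 h).2)⟩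

theorem Prov_self {φ : Form} (hM : IsSILogic M) (h : Prov M M φ) : φ ∈ M := by
  induction h with
  | prem h1 => exact h1
  | ax h1 => exact h1
  | mp _ _ ih1 ih2 => exact hM.2.1 _ _ ih1 ih2

/-- The main countermodel construction. -/
theorem main_counter (hM : IsSILogic M) (hwpl : wPLax ∈ M) (hbw : bw2ax ∈ M)
    (hkc : kcax ∈ M) {φ0 : Form} (hφ0 : φ0 ∉ M) :
    ∃ n, 2 ≤ n ∧ ¬ (SFrame n).Valid φ0 := by
  have hIPC : IPCSet ⊆ M := hM.1
  -- the root prime theory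
  have hMcons : ¬ Prov M M φ0 := fun h => hφ0 (Prov_self hM h)
  obtain ⟨x0, hMx0, hx0, hφx0⟩ := lindenbaum hIPC hMcons
  -- the subformulas of `φ0`
  set Sg : Finset Form := (subs φ0).toFinset with hSgdef
  have hclimp : ∀ γ δ : Form, Form.imp γ δ ∈ Sg → γ ∈ Sg ∧ δ ∈ Sg := by
    intro γ δ h
    rw [hSgdef, List.mem_toFinset] at h ⊢
    rw [List.mem_toFinset]
    exact subs_imp φ0 h
  have hcland : ∀ γ δ : Form, Form.and γ δ ∈ Sg → γ ∈ Sg ∧ δ ∈ Sg := by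
    intro γ δ h
    rw [hSgdef, List.mem_toFinset] at h ⊢
    rw [List.mem_toFinset]
    exact subs_and φ0 h
  have hclor : ∀ γ δ : Form, Form.or γ δ ∈ Sg → γ ∈ Sg ∧ δ ∈ Sg := by
    intro γ δ h
    rw [hSgdef, List.mem_toFinset] at h ⊢
    rw [List.mem_toFinset]
    exact subs_or φ0 h
  have hφ0Sg : φ0 ∈ Sg := by
    rw [hSgdef, List.mem_toFinset]
    exact mem_subs_self φ0
  -- the witness-closed finite family above `x0`
  obtain ⟨W, hWfin, hx0W, hWgood, hWcl⟩ :=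
    witness_closure hIPC Sg hclimp (Sg \ trace Sg x0).card x0 hx0 le_rfl
  -- a Σ-maximal top
  obtain ⟨c0, hc0, hxc0, hWc0⟩ := finite_join hM hkc hx0 hWfin hWgood
  obtain ⟨t, ht, hc0t, htmax⟩ := exists_sigma_max hIPC Sg hc0
  set S : Set (Set Form) := insert t W with hSdef
  have hSfin : S.Finite := hWfin.insert t
  have hx0S : x0 ∈ S := Set.mem_insert_of_mem _ hx0W
  have htS : t ∈ S := Set.mem_insert _ _
  have hSprime : ∀ y ∈ S, IsPrime M y := by
    intro y hy
    rcases Set.mem_insert_iff.1 hy with rfl | hy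
    · exact ht
    · exact (hWgood y hy).1
  have hSx0 : ∀ y ∈ S, x0 ⊆ y := by
    intro y hy
    rcases Set.mem_insert_iff.1 hy with rfl | hy
    · exact hxc0.trans hc0t
    · exact (hWgood y hy).2
  have hStop : ∀ y ∈ S, y ⊆ t := by
    intro y hy
    rcases Set.mem_insert_iff.1 hy with rfl | hy
    · exact subset_rfl
    · exact (hWc0 y hy).trans hc0t
  -- witness closure for `S`
  have hScl : ∀ y ∈ S, ∀ γ δ : Form, Form.imp γ δ ∈ Sg → Form.imp γ δ ∉ y →
      γ ∉ y → ∃ y' ∈ S, y ⊆ y' ∧ γ ∈ y' ∧ δ ∉ y' := by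
    intro y hy γ δ hγδ hny hγy
    rcases Set.mem_insert_iff.1 hy with rfl | hy
    · -- impossible at the Σ-maximal top
      exfalso
      obtain ⟨t', ht', htt', hγt', _⟩ := exists_witness hIPC ht hny
      have : γ ∈ trace Sg t' := mem_trace.2 ⟨(hclimp γ δ hγδ).1, hγt'⟩
      rw [htmax t' ht' htt'] at this
      exact hγy (mem_trace.1 this).2
    · obtain ⟨y', hy', h1, h2, h3⟩ := hWcl y hy γ δ hγδ hny hγy
      exact ⟨y', Set.mem_insert_of_mem _ hy', h1, h2, h3⟩
  -- the counting function and its properties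
  set cnt : Set Form → ℕ := fun y => {x | x ∈ S ∧ x ⊆ y ∧ x ≠ y}.ncard with hcntdef
  have hbelowfin : ∀ y : Set Form, {x | x ∈ S ∧ x ⊆ y ∧ x ≠ y}.Finite := by
    intro y
    exact hSfin.subset (fun x hx => hx.1)
  have hcnt_strict : ∀ a ∈ S, ∀ b ∈ S, a ⊆ b → a ≠ b → cnt a < cnt b := by
    intro a ha b hb hab hne
    have hss : {x | x ∈ S ∧ x ⊆ a ∧ x ≠ a} ⊂ {x | x ∈ S ∧ x ⊆ b ∧ x ≠ b} := by
      constructor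
      · rintro x ⟨hxS, hxa, hxna⟩
        refine ⟨hxS, hxa.trans hab, ?_⟩
        rintro rfl
        exact hne (Set.Subset.antisymm hab (hxa))
      · intro hsub
        have : a ∈ {x | x ∈ S ∧ x ⊆ a ∧ x ≠ a} := hsub ⟨ha, hab, hne⟩
        exact this.2.2 rfl
    exact Set.ncard_lt_ncard hss (hbelowfin b)
  have hpar_below : ∀ a ∈ S, ∀ b ∈ S, ¬ a ⊆ b → ¬ b ⊆ a →
      {x | x ∈ S ∧ x ⊆ a ∧ x ≠ a} = {x | x ∈ S ∧ x ⊆ b ∧ x ≠ b} := by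
    have key : ∀ a ∈ S, ∀ b ∈ S, ¬ a ⊆ b → ¬ b ⊆ a →
        {x | x ∈ S ∧ x ⊆ a ∧ x ≠ a} ⊆ {x | x ∈ S ∧ x ⊆ b ∧ x ≠ b} := by
      rintro a ha b hb hab hba x ⟨hxS, hxa, hxna⟩
      have hax : ¬ a ⊆ x := fun h => hxna (Set.Subset.antisymm hxa h)
      have hxb : x ⊆ b :=
        pstar hM hwpl hbw hx0 (hSprime x hxS) (hSprime a ha) (hSprime b hb)
          (hSx0 x hxS) (hSx0 a ha) (hSx0 b hb) hxa hax hab hba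
      refine ⟨hxS, hxb, ?_⟩
      rintro rfl
      exact hba hxa
    intro a ha b hb hab hba
    exact Set.Subset.antisymm (key a ha b hb hab hba) (key b hb a ha hba hab)
  have hcnt_eq_par : ∀ a ∈ S, ∀ b ∈ S, ¬ a ⊆ b → ¬ b ⊆ a → cnt a = cnt b := by
    intro a ha b hb hab hba
    rw [hcntdef]
    simp only
    rw [hpar_below a ha b hb hab hba]
  have hcnt_lt_sub : ∀ a ∈ S, ∀ b ∈ S, cnt a < cnt b → a ⊆ b ∧ a ≠ b := by
    intro a ha b hb hlt
    by_cases hab : a ⊆ b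
    · refine ⟨hab, ?_⟩
      rintro rfl
      omega
    · exfalso
      by_cases hba : b ⊆ a
      · have hne : b ≠ a := by
          rintro rfl
          exact hab subset_rfl
        have := hcnt_strict b hb a ha hba hne
        omega
      · have := hcnt_eq_par a ha b hb hab hba
        omega
  have hcnt_eq_ne : ∀ a ∈ S, ∀ b ∈ S, cnt a = cnt b → a ≠ b →
      ¬ a ⊆ b ∧ ¬ b ⊆ a := by
    intro a ha b hb heq hne
    constructor
    · intro h
      have := hcnt_strict a ha b hb h hne
      omega
    · intro h
      have := hcnt_strict b hb a ha h (Ne.symm hne)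
      omega
  have hcnt_x0 : cnt x0 = 0 := by
    rw [hcntdef]
    simp only
    have : {x | x ∈ S ∧ x ⊆ x0 ∧ x ≠ x0} = ∅ := by
      rw [Set.eq_empty_iff_forall_notMem]
      rintro x ⟨hxS, hxx0, hxne⟩
      exact hxne (Set.Subset.antisymm hxx0 (hSx0 x hxS))
    rw [this, Set.ncard_empty]
  have hcnt_t : ∀ y ∈ S, y ≠ t → cnt y < cnt t := by
    intro y hy hne
    exact hcnt_strict y hy t htS (hStop y hy) hne
  -- no three distinct elements of `S` share a `cnt` value
  have hno3 : ∀ y1 ∈ S, ∀ y2 ∈ S, ∀ y3 ∈ S, cnt y1 = cnt y2 → cnt y2 = cnt y3 →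
      y1 ≠ y2 → y2 ≠ y3 → y1 ≠ y3 → False := by
    intro y1 h1 y2 h2 y3 h3 e12 e23 n12 n23 n13
    obtain ⟨a12, a21⟩ := hcnt_eq_ne y1 h1 y2 h2 e12 n12
    obtain ⟨a23, a32⟩ := hcnt_eq_ne y2 h2 y3 h3 e23 n23
    obtain ⟨a13, a31⟩ := hcnt_eq_ne y1 h1 y3 h3 (e12.trans e23) n13
    exact width2 hM hbw hx0 (hSprime y1 h1) (hSprime y2 h2) (hSprime y3 h3)
      (hSx0 y1 h1) (hSx0 y2 h2) (hSx0 y3 h3) a12 a21 a23 a32 a13 a31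
  -- the ladder of `cnt`-values
  set Vals : Finset ℕ := hSfin.toFinset.image cnt with hValsdef
  have hmemVals : ∀ y ∈ S, cnt y ∈ Vals := by
    intro y hy
    rw [hValsdef]
    exact Finset.mem_image.2 ⟨y, hSfin.mem_toFinset.2 hy, rfl⟩
  have hValsmem : ∀ v ∈ Vals, ∃ y ∈ S, cnt y = v := by
    intro v hv
    rw [hValsdef] at hv
    obtain ⟨y, hy, hvy⟩ := Finset.mem_image.1 hv
    exact ⟨y, hSfin.mem_toFinset.1 hy, hvy⟩
  set k : ℕ := Vals.card with hkdef
  have hk1 : 1 ≤ k := by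
    rw [hkdef]
    exact Finset.card_pos.2 ⟨cnt x0, hmemVals x0 hx0S⟩
  set e := Vals.orderIsoOfFin hkdef.symm with hedef
  have he_lt : ∀ i j : Fin k, (e i).1 < (e j).1 ↔ i < j := by
    intro i j
    rw [Subtype.coe_lt_coe]
    exact e.lt_iff_lt
  have he_symm : ∀ (v : ℕ) (hv : v ∈ Vals), (e (e.symm ⟨v, hv⟩)).1 = v := by
    intro v hv
    rw [OrderIso.apply_symm_apply]
  -- the bottom and top classes
  have hi0 : (0 : ℕ) < k := hk1
  have hilast : k - 1 < k := by omega
  have he0 : (e ⟨0, hi0⟩).1 = 0 := by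
    have hmono : e ⟨0, hi0⟩ ≤ e (e.symm ⟨cnt x0, hmemVals x0 hx0S⟩) := by
      apply e.monotone
      rw [Fin.le_def]
      exact Nat.zero_le _
    have h1 : (e ⟨0, hi0⟩).1 ≤ (e (e.symm ⟨cnt x0, hmemVals x0 hx0S⟩)).1 :=
      Subtype.coe_le_coe.2 hmono
    rw [he_symm, hcnt_x0] at h1
    omega
  have helast : (e ⟨k - 1, hilast⟩).1 = cnt t := by
    have hj := (e.symm ⟨cnt t, hmemVals t htS⟩).isLt
    have hmono : e (e.symm ⟨cnt t, hmemVals t htS⟩) ≤ e ⟨k - 1, hilast⟩ := by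
      apply e.monotone
      rw [Fin.le_def]
      show (e.symm ⟨cnt t, hmemVals t htS⟩ : Fin k).1 ≤ k - 1
      omega
    have h1 : (e (e.symm ⟨cnt t, hmemVals t htS⟩)).1 ≤ (e ⟨k - 1, hilast⟩).1 :=
      Subtype.coe_le_coe.2 hmono
    rw [he_symm] at h1
    obtain ⟨y, hyS, hycnt⟩ := hValsmem _ (e ⟨k - 1, hilast⟩).2
    have h2 : cnt y ≤ cnt t := by
      rcases eq_or_ne y t with rfl | hne
      · exact le_rfl
      · exact (hcnt_t y hyS hne).le
    omega
  have hcls0 : ∀ y ∈ S, cnt y = (e ⟨0, hi0⟩).1 → y = x0 := by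
    intro y hyS hcy
    rw [he0] at hcy
    by_contra hne
    have : x0 ∈ {x | x ∈ S ∧ x ⊆ y ∧ x ≠ y} :=
      ⟨hx0S, hSx0 y hyS, fun h => hne h.symm⟩
    have := (Set.ncard_pos (hbelowfin y)).2 ⟨x0, this⟩
    rw [hcntdef] at hcy
    simp only at hcy
    omega
  have hclstop : ∀ y ∈ S, cnt y = (e ⟨k - 1, hilast⟩).1 → y = t := by
    intro y hyS hcy
    rw [helast] at hcy
    by_contra hne
    have := hcnt_t y hyS hne
    omega
  -- the pair of elements in each class
  have hpair : ∀ i : Fin k, ∃ p : Set Form × Set Form,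
      (p.1 ∈ S ∧ cnt p.1 = (e i).1) ∧ (p.2 ∈ S ∧ cnt p.2 = (e i).1) ∧
      ∀ y ∈ S, cnt y = (e i).1 → y = p.1 ∨ y = p.2 := by
    intro i
    obtain ⟨y1, hy1S, hy1c⟩ := hValsmem _ (e i).2
    by_cases h2 : ∃ y2, (y2 ∈ S ∧ cnt y2 = (e i).1) ∧ y2 ≠ y1
    · obtain ⟨y2, ⟨hy2S, hy2c⟩, hne⟩ := h2
      refine ⟨(y1, y2), ⟨hy1S, hy1c⟩, ⟨hy2S, hy2c⟩, ?_⟩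
      intro y hyS hyc
      by_contra hcon
      push_neg at hcon
      exact hno3 y hyS y1 hy1S y2 hy2S (hyc.trans hy1c.symm)
        (hy1c.trans hy2c.symm) hcon.1 (Ne.symm hne) hcon.2
    · refine ⟨(y1, y1), ⟨hy1S, hy1c⟩, ⟨hy1S, hy1c⟩, ?_⟩
      intro y hyS hyc
      left
      by_contra hne
      exact h2 ⟨y, ⟨hyS, hyc⟩, hne⟩
  choose pick hpick1 hpick2 hpick3 using hpair
  -- the frame
  set n : ℕ := k + 1 with hndef
  have hn2 : 2 ≤ n := by omega
  have hn1k : n - 1 = k := by omega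
  set cidx : (SFrame n).W → ℕ := fun w => k - 1 - min (sIdx n w) (k - 1)
    with hcidxdef
  have hcidxlt : ∀ w, cidx w < k := by
    intro w
    rw [hcidxdef]
    simp only
    omega
  set cidxF : (SFrame n).W → Fin k := fun w => ⟨cidx w, hcidxlt w⟩ with hcidxFdef
  have hcidxF_val : ∀ w, (cidxF w : ℕ) = k - 1 - min (sIdx n w) (k - 1) :=
    fun _ => rfl
  set slot : (SFrame n).W → Bool := fun w =>
    match w with
    | some (some (_, b)) => b
    | _ => false
    with hslotdef
  set g : (SFrame n).W → Set Form := fun w =>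
    if slot w = true then (pick (cidxF w)).2 else (pick (cidxF w)).1
    with hgdef
  have hgS : ∀ w, g w ∈ S ∧ cnt (g w) = (e (cidxF w)).1 := by
    intro w
    rw [hgdef]
    simp only
    by_cases h : slot w = true
    · rw [if_pos h]
      exact ⟨(hpick2 (cidxF w)).1, (hpick2 (cidxF w)).2⟩
    · rw [if_neg h]
      exact ⟨(hpick1 (cidxF w)).1, (hpick1 (cidxF w)).2⟩
  -- `g` is monotone
  have hg_mono : ∀ w w', (SFrame n).le w w' → g w ⊆ g w' := by
    intro w w' hle
    rcases hle with heq | hlt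
    · rw [heq]
    · have hum : cidx w ≤ cidx w' := by
        rw [hcidxdef]
        simp only
        omega
      rcases eq_or_lt_of_le hum with heq | hltc
      · -- both in the clamped bottom region: both are x0
        have hboth : cidx w = 0 ∧ cidx w' = 0 := by
          rw [hcidxdef] at heq ⊢
          simp only at heq ⊢
          omega
        have hpt : cidxF w = ⟨0, hi0⟩ := by
          rw [hcidxFdef]
          exact Fin.ext hboth.1
        have hpt' : cidxF w' = ⟨0, hi0⟩ := by
          rw [hcidxFdef]
          exact Fin.ext hboth.2
        have h1 : g w = x0 := by
          apply hcls0 (g w) (hgS w).1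
          rw [(hgS w).2, hpt]
        have h2 : g w' = x0 := by
          apply hcls0 (g w') (hgS w').1
          rw [(hgS w').2, hpt']
        rw [h1, h2]
      · have hfin : (cidxF w) < (cidxF w') := by
          rw [hcidxFdef]
          simp only [Fin.mk_lt_mk]
          exact hltc
        have hcc : cnt (g w) < cnt (g w') := by
          rw [(hgS w).2, (hgS w').2]
          exact (he_lt _ _).2 hfin
        exact (hcnt_lt_sub _ (hgS w).1 _ (hgS w').1 hcc).1
  have hg_root : g none = x0 := by
    have hpt : cidxF (none : (SFrame n).W) = ⟨0, hi0⟩ := by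
      rw [hcidxFdef]
      apply Fin.ext
      show cidx (none : (SFrame n).W) = 0
      rw [hcidxdef]
      show k - 1 - min (sIdx n none) (k - 1) = 0
      simp only [sIdx]
      omega
    apply hcls0 (g none) (hgS none).1
    rw [(hgS none).2, hpt]
  have hg_top : g (some none) = t := by
    have hpt : cidxF (some none : (SFrame n).W) = ⟨k - 1, hilast⟩ := by
      rw [hcidxFdef]
      apply Fin.ext
      show cidx (some none : (SFrame n).W) = k - 1
      rw [hcidxdef]
      show k - 1 - min (sIdx n (some none)) (k - 1) = k - 1
      simp only [sIdx]
      omega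
    apply hclstop _ (hgS (some none)).1
    rw [(hgS (some none)).2, hpt]
  -- every element of `S` strictly above `g w` is hit above `w`
  have hg_hit : ∀ w, ∀ y ∈ S, g w ⊆ y → g w ≠ y →
      ∃ w', (SFrame n).le w w' ∧ g w' = y := by
    intro w y hyS hsub hne
    have hlt : cnt (g w) < cnt y := hcnt_strict _ (hgS w).1 y hyS hsub hne
    have hylt : (e (e.symm ⟨cnt y, hmemVals y hyS⟩)).1 = cnt y := he_symm _ _
    set iy : Fin k := e.symm ⟨cnt y, hmemVals y hyS⟩ with hiydef
    have hwy : cidxF w < iy := by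
      rw [← he_lt]
      rw [(hgS w).2] at hlt
      omega
    by_cases htop : (iy : ℕ) = k - 1
    · have hyt : y = t := by
        apply hclstop y hyS
        have hiq : iy = ⟨k - 1, hilast⟩ := Fin.ext htop
        rw [← hylt, hiq]
      refine ⟨some none, sframe_top_le hn2 w, ?_⟩
      rw [hg_top, hyt]
    · have hiylt : (iy : ℕ) < k - 1 := by
        have := iy.isLt
        omega
      have hjlt : k - 1 - (iy : ℕ) - 1 < n - 1 := by omega
      set b0 : Bool := if y = (pick iy).1 then false else true with hb0def
      set w' : (SFrame n).W := some (some (⟨k - 1 - (iy : ℕ) - 1, hjlt⟩, b0))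
        with hw'def
      have hsw' : sIdx n w' = k - 1 - (iy : ℕ) := by
        rw [hw'def]
        show (k - 1 - (iy : ℕ) - 1) + 1 = k - 1 - (iy : ℕ)
        omega
      have hcidxw' : cidxF w' = iy := by
        apply Fin.ext
        rw [hcidxF_val, hsw']
        omega
      have hle : (SFrame n).le w w' := by
        rw [sframe_le]
        right
        rw [hsw']
        have h1 : (cidxF w : ℕ) < (iy : ℕ) := hwy
        rw [hcidxF_val] at h1
        omega
      refine ⟨w', hle, ?_⟩
      rw [hgdef]
      simp only
      have hslotw' : slot w' = b0 := by rw [hw'def, hslotdef]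
      rw [hslotw', hcidxw']
      by_cases hy1 : y = (pick iy).1
      · have hb : b0 = false := by rw [hb0def, if_pos hy1]
        rw [hb, if_neg (by simp)]
        exact hy1.symm
      · have hb : b0 = true := by rw [hb0def, if_neg hy1]
        rw [hb, if_pos rfl]
        rcases hpick3 iy y hyS hylt.symm with h | h
        · exact absurd h hy1
        · exact h.symm
  -- the valuation and the truth lemma
  have hVpers : (SFrame n).Persistent (fun p w => Form.var p ∈ g w) := by
    intro p a b hab h
    exact hg_mono a b hab h
  have truth : ∀ ψ : Form, ψ ∈ Sg → ∀ w : (SFrame n).W,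
      ((SFrame n).force (fun p w => Form.var p ∈ g w) ψ w ↔ ψ ∈ g w) := by
    intro ψ
    induction ψ with
    | var p => intro _ w; exact Iff.rfl
    | bot =>
        intro _ w
        constructor
        · intro h; exact h.elim
        · intro h; exact ((hSprime _ (hgS w).1).2.1 h).elim
    | top =>
        intro _ w
        constructor
        · intro _; exact (hSprime _ (hgS w).1).1 _ (Prov.axIPC hIPC IPC.topI)
        · intro _; trivial
    | and α β ihα ihβ =>
        intro hmem w
        have hα := (hcland α β hmem).1
        have hβ := (hcland α β hmem).2
        constructor
        · intro hf
          exact (IsPrime.and_mem hIPC (hSprime _ (hgS w).1)).2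
            ⟨(ihα hα w).1 hf.1, (ihβ hβ w).1 hf.2⟩
        · intro h
          have := (IsPrime.and_mem hIPC (hSprime _ (hgS w).1)).1 h
          exact ⟨(ihα hα w).2 this.1, (ihβ hβ w).2 this.2⟩
    | or α β ihα ihβ =>
        intro hmem w
        have hα := (hclor α β hmem).1
        have hβ := (hclor α β hmem).2
        constructor
        · rintro (h1 | h1)
          · exact IsPrime.or_mem_left hIPC (hSprime _ (hgS w).1) ((ihα hα w).1 h1)
          · exact IsPrime.or_mem_right hIPC (hSprime _ (hgS w).1) ((ihβ hβ w).1 h1)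
        · intro h
          rcases (hSprime _ (hgS w).1).2.2 _ _ h with h1 | h1
          · exact Or.inl ((ihα hα w).2 h1)
          · exact Or.inr ((ihβ hβ w).2 h1)
    | imp α β ihα ihβ =>
        intro hmem w
        have hα := (hclimp α β hmem).1
        have hβ := (hclimp α β hmem).2
        constructor
        · intro hf
          by_contra hni
          by_cases hαw : α ∈ g w
          · have hβw : β ∉ g w :=
              imp_notmem_right hIPC (hSprime _ (hgS w).1) hni
            exact hβw ((ihβ hβ w).1 (hf w ((SFrame n).refl w) ((ihα hα w).2 hαw)))
          · obtain ⟨y', hy'S, hsub, hγ, hδ⟩ :=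
              hScl (g w) (hgS w).1 α β hmem hni hαw
            have hne : g w ≠ y' := fun h => hαw (h ▸ hγ)
            obtain ⟨w', hlew', hgw'⟩ := hg_hit w y' hy'S hsub hne
            apply hδ
            rw [← hgw']
            exact (ihβ hβ w').1 (hf w' hlew' ((ihα hα w').2 (hgw' ▸ hγ)))
        · intro h v hv hαv
          have hsub := hg_mono w v hv
          exact (ihβ hβ v).2
            ((hSprime _ (hgS v).1).mp_mem (hsub h) ((ihα hα v).1 hαv))
  refine ⟨n, hn2, ?_⟩
  intro hval
  have := hval (fun p w => Form.var p ∈ g w) hVpers none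
  rw [truth φ0 hφ0Sg none, hg_root] at this
  exact hφx0 this

end WithM

end S16


/-- The logic `Box = wPL ⊕ bw₂ ⊕ (¬p ∨ ¬¬p)` is the logic of
the class of the posets `S_n`. -/
theorem statement16 :
    BoxLogic = LogK {F | ∃ n, 2 ≤ n ∧ F = SFrame n} := by
  apply Set.Subset.antisymm S16.soundness
  intro φ hφ
  show φ ∈ oplus wPL {bw2ax, kcax}
  rw [oplus]
  refine Set.mem_sInter.2 ?_
  intro M hM
  obtain ⟨hsi, hwpl, hax⟩ := hM
  by_contra hφM
  obtain ⟨n, hn2, hnval⟩ := S16.main_counter hsi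
    (hwpl S16.wPLax_mem_wPL) (hax (Set.mem_insert _ _))
    (hax (Set.mem_insert_of_mem _ rfl)) hφM
  exact hnval (hφ (SFrame n) ⟨n, hn2, rfl⟩)
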